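/- arXiv:1908.05678 — 3 statements merged into one kernel-verified Lean document; each statement's English description precedes it below -/
import Mathlib

section
/- Let G be a finite disconnected simple graph with connected components G_1,...,G_s, each having at least one edge, and suppose the toric ideals I_{G_1} and I_{G_2} are both nonzero. Then the edge ring K[G] = K[G_1] ⊗_K ··· ⊗_K K[G_s] does not have a linear resolution. -/
open MvPolynomial Finset
open scoped Pointwise

/-! ## Polytope / Ehrhart definitions -/

/-- The lattice-point enumerator of dilates of `P` (with the convention `E(0) = 1`). -/
noncomputable def ehrhart {V : Type} (P : Set (V → ℝ)) (t : ℕ) : ℤ :=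
  if t = 0 then 1 else
    Nat.card {x : V → ℤ | (fun v => (x v : ℝ)) ∈ (t : ℝ) • P}

/-- The `i`-th coefficient of the `h^*`-polynomial of `P`, computed with respect to
dimension `d`, via the inversion formula
`h^*_i = ∑_{j ≤ i} (-1)^j (d+1 choose j) E(i-j)`. -/
noncomputable def hstarCoeff {V : Type} (P : Set (V → ℝ)) (d i : ℕ) : ℤ :=
  ∑ j ∈ Finset.range (i + 1), (-1 : ℤ) ^ j * (Nat.choose (d + 1) j) * ehrhart P (i - j)

/-- The dimension of `P`, i.e. the dimension of its affine hull. -/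
noncomputable def polyDim {V : Type} [Fintype V] (P : Set (V → ℝ)) : ℕ :=
  Module.finrank ℝ (vectorSpan ℝ P)

/-- The degree of the `h^*`-polynomial of `P`. -/
noncomputable def hstarDeg {V : Type} [Fintype V] (P : Set (V → ℝ)) : ℕ :=
  sSup {i : ℕ | hstarCoeff P (polyDim P) i ≠ 0}

/-- The codegree of `P`: the least positive dilation factor `r` such that the relative
interior of `r • P` contains a lattice point. -/
noncomputable def polyCodeg {V : Type} [Fintype V] (P : Set (V → ℝ)) : ℕ :=
  sInf {r : ℕ | 1 ≤ r ∧
    ∃ x : V → ℤ, (fun v => (x v : ℝ)) ∈ intrinsicInterior ℝ ((r : ℝ) • P)}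

/-! ## Edge polytopes and edge rings -/

/-- `ρ(e) = 𝐞_i + 𝐞_j` for an edge `e = {i,j}`, as a point of `ℝ^V`. -/
noncomputable def rho {V : Type} [DecidableEq V] (e : Sym2 V) : V → ℝ :=
  Sym2.lift ⟨fun a b v => (if v = a then (1 : ℝ) else 0) + (if v = b then 1 else 0),
    fun a b => by funext v; exact add_comm _ _⟩ e

/-- The edge polytope `P_G` of a graph `G`, the convex hull of the `ρ(e)`, `e ∈ E(G)`. -/
noncomputable def edgePolytope {V : Type} [DecidableEq V] (G : SimpleGraph V) :
    Set (V → ℝ) :=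
  convexHull ℝ (rho '' G.edgeSet)

/-- The monomial map `x_e ↦ t_i t_j s` (for `e = {i,j}`), from the polynomial ring on the
edges of `G` to `K[t_v : v ∈ V][s]`; the extra variable `s` is `X (Sum.inr ())`. -/
noncomputable def edgeRingHom (K : Type) [Field K] {V : Type} (G : SimpleGraph V) :
    MvPolynomial G.edgeSet K →ₐ[K] MvPolynomial (V ⊕ Unit) K :=
  MvPolynomial.aeval fun e =>
    Sym2.lift ⟨fun a b => X (Sum.inl a) * X (Sum.inl b) * X (Sum.inr ()),
      fun a b => by ring⟩ (e : Sym2 V)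

/-- The toric ideal `I_G` of the graph `G`: the kernel of the monomial map
`x_e ↦ t_i t_j s`.  The edge ring `K[G]` is (isomorphic to) the quotient by `I_G`. -/
noncomputable def toricIdeal (K : Type) [Field K] {V : Type} (G : SimpleGraph V) :
    Ideal (MvPolynomial G.edgeSet K) :=
  RingHom.ker (edgeRingHom K G)

/-- The variable corresponding to the `i`-th edge of the walk `c` (and `1` if `i` is out
of range). -/
noncomputable def edgeVar (K : Type) [Field K] {V : Type} {G : SimpleGraph V} {u v : V}
    (c : G.Walk u v) (i : ℕ) : MvPolynomial G.edgeSet K :=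
  if h : i < c.edges.length then
    MvPolynomial.X ⟨c.edges.get ⟨i, h⟩, c.edges_subset_edgeSet (c.edges.get_mem _)⟩
  else 1

/-- The binomial `f_C` of an even closed walk `C` of length `2m`: the alternating products
of the edge variables along `C`. -/
noncomputable def cycleBinomial (K : Type) [Field K] {V : Type} {G : SimpleGraph V}
    {u : V} (m : ℕ) (c : G.Walk u u) : MvPolynomial G.edgeSet K :=
  (∏ j ∈ Finset.range m, edgeVar K c (2 * j)) -
    ∏ j ∈ Finset.range m, edgeVar K c (2 * j + 1)

/-! ## Graded free resolutions -/

/-- A finite graded free resolution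
`0 → F_len → ⋯ → F_2 → F_1 → S → S/I → 0` of `S/I`, where `S = K[x_σ]` with the
standard grading, `F_i` is the graded free module with basis `B i`, the basis element
`b : B i` having degree `deg i b`.  `ε : F 1 → S` has image `I`, and the maps are graded
of degree zero. -/
structure GradedFreeRes {σ : Type} (K : Type) [Field K] (I : Ideal (MvPolynomial σ K)) where
  B : ℕ → Type
  finB : ∀ i, Finite (B i)
  len : ℕ
  empty_of_gt : ∀ i, len < i → IsEmpty (B i)
  deg : ∀ i, B i → ℕ
  ε : (B 1 →₀ MvPolynomial σ K) →ₗ[MvPolynomial σ K] MvPolynomial σ K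
  φ : ∀ i : ℕ, (B (i + 2) →₀ MvPolynomial σ K) →ₗ[MvPolynomial σ K] (B (i + 1) →₀ MvPolynomial σ K)
  range_ε : LinearMap.range ε = I
  exact_one : LinearMap.ker ε = LinearMap.range (φ 0)
  exact_succ : ∀ i, LinearMap.ker (φ i) = LinearMap.range (φ (i + 1))
  homog_ε : ∀ b : B 1, (ε (Finsupp.single b 1)).IsHomogeneous (deg 1 b)
  homog_φ : ∀ (i : ℕ) (b : B (i + 2)) (b' : B (i + 1)),
      ((φ i (Finsupp.single b 1)) b').IsHomogeneous (deg (i + 2) b - deg (i + 1) b') ∧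
        (((φ i (Finsupp.single b 1)) b') ≠ 0 → deg (i + 1) b' ≤ deg (i + 2) b)

/-- `S/I` has a `q`-linear (minimal graded free) resolution:  there is a nontrivial finite
graded free resolution of `S/I` in which the `i`-th free module is generated in the single
degree `q + i - 1` (for `i ≥ 1`). -/
def HasLinearResolution {σ : Type} (K : Type) [Field K] (I : Ideal (MvPolynomial σ K))
    (q : ℕ) : Prop :=
  ∃ F : GradedFreeRes K I, Nonempty (F.B 1) ∧
    ∀ i, 1 ≤ i → ∀ b : F.B i, F.deg i b = q + i - 1

/-- The Castelnuovo–Mumford regularity of `S/I`: the least `r` such that `S/I` admits a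
(finite) graded free resolution whose `i`-th free module is generated in degrees `≤ r + i`. -/
noncomputable def cmReg {σ : Type} (K : Type) [Field K] (I : Ideal (MvPolynomial σ K)) : ℕ :=
  sInf {r : ℕ | ∃ F : GradedFreeRes K I, ∀ i, 1 ≤ i → ∀ b : F.B i, F.deg i b ≤ r + i}

/-! ## The special graphs of the paper (0-indexed versions) -/

/-- The disjoint union of two cycles of length `n` (for `n ≥ 3`). -/
def twoCyclesGraph (n : ℕ) : SimpleGraph (Fin 2 × Fin n) :=
  SimpleGraph.fromRel fun a b =>
    a.1 = b.1 ∧ (a.2.val + 1 = b.2.val ∨ (a.2.val = n - 1 ∧ b.2.val = 0))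

/-- Two `2q`-cycles glued at the single vertex `0` (the paper's vertex `1`); a graph on
`4q - 1` vertices. -/
def wedgeGraph (q : ℕ) : SimpleGraph (Fin (4 * q - 1)) :=
  SimpleGraph.fromRel fun a b =>
    (a.val + 1 = b.val ∧ b.val ≤ 2 * q - 1) ∨ (a.val = 2 * q - 1 ∧ b.val = 0) ∨
    (a.val = 0 ∧ b.val = 2 * q) ∨ (a.val + 1 = b.val ∧ 2 * q + 1 ≤ b.val) ∨
    (a.val = 4 * q - 2 ∧ b.val = 0)

/-- The graph `G^{(e)}_{k,m}`: a `2q`-cycle on the vertices `0,…,2q-1` together with a path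
of length `2m` from vertex `0` to vertex `2k` through the new vertices `2q,…,2q+2m-2`
(this is the paper's graph, with all vertex labels shifted down by one). -/
def Ge (q k m : ℕ) : SimpleGraph (Fin (2 * q + 2 * m - 1)) :=
  SimpleGraph.fromRel fun a b =>
    (a.val + 1 = b.val ∧ b.val ≤ 2 * q - 1) ∨ (a.val = 2 * q - 1 ∧ b.val = 0) ∨
    (a.val = 0 ∧ b.val = 2 * q) ∨ (a.val + 1 = b.val ∧ 2 * q + 1 ≤ b.val) ∨
    (a.val = 2 * q + 2 * m - 2 ∧ b.val = 2 * k)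

/-- The graph `G^{(o)}_{k,m}`: a `2q`-cycle on the vertices `0,…,2q-1` together with a path
of length `2m - 1` from vertex `0` to vertex `2k - 1` through the new vertices
`2q,…,2q+2m-3` (the paper's graph, labels shifted down by one). -/
def Go (q k m : ℕ) : SimpleGraph (Fin (2 * q + 2 * m - 2)) :=
  SimpleGraph.fromRel fun a b =>
    (a.val + 1 = b.val ∧ b.val ≤ 2 * q - 1) ∨ (a.val = 2 * q - 1 ∧ b.val = 0) ∨
    (a.val = 0 ∧ b.val = 2 * q) ∨ (a.val + 1 = b.val ∧ 2 * q + 1 ≤ b.val) ∨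
    (a.val = 2 * q + 2 * m - 3 ∧ b.val = 2 * k - 1)


/-! ## Auxiliary machinery for the proof of Statement 1 -/

namespace EdgeProof

open Sum

section WeightedComponents

variable {σ K : Type} [CommRing K]

theorem wHC_mul_right (β : σ → ℕ) {p : MvPolynomial σ K} {m : ℕ}
    (hp : p.IsWeightedHomogeneous β m) (a : MvPolynomial σ K) {n : ℕ} (hmn : m ≤ n) :
    weightedHomogeneousComponent β n (a * p)
      = weightedHomogeneousComponent β (n - m) a * p := by
  classical
  ext d
  rw [coeff_weightedHomogeneousComponent, coeff_mul, coeff_mul]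
  split_ifs with hd
  · refine Finset.sum_congr rfl fun x hx => ?_
    rcases eq_or_ne (coeff x.2 p) 0 with h0 | h0
    · rw [h0, mul_zero, mul_zero]
    · rw [coeff_weightedHomogeneousComponent, if_pos]
      have hx2 : Finsupp.weight β x.2 = m := hp h0
      have : Finsupp.weight β x.1 + Finsupp.weight β x.2 = n := by
        rw [← map_add, (Finset.HasAntidiagonal.mem_antidiagonal.mp hx), hd]
      omega
  · refine (Finset.sum_eq_zero fun x hx => ?_).symm
    rcases eq_or_ne (coeff x.2 p) 0 with h0 | h0
    · rw [h0, mul_zero]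
    · rw [coeff_weightedHomogeneousComponent, if_neg, zero_mul]
      have hx2 : Finsupp.weight β x.2 = m := hp h0
      have : Finsupp.weight β x.1 + Finsupp.weight β x.2 = Finsupp.weight β d := by
        rw [← map_add, (Finset.HasAntidiagonal.mem_antidiagonal.mp hx)]
      omega

theorem wHC_mul_right_zero (β : σ → ℕ) {p : MvPolynomial σ K} {m : ℕ}
    (hp : p.IsWeightedHomogeneous β m) (a : MvPolynomial σ K) {n : ℕ} (hmn : n < m) :
    weightedHomogeneousComponent β n (a * p) = 0 := by
  classical
  ext d
  rw [coeff_weightedHomogeneousComponent, coeff_zero]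
  split_ifs with hd
  · rw [coeff_mul]
    refine Finset.sum_eq_zero fun x hx => ?_
    rcases eq_or_ne (coeff x.2 p) 0 with h0 | h0
    · rw [h0, mul_zero]
    · exfalso
      have hx2 : Finsupp.weight β x.2 = m := hp h0
      have : Finsupp.weight β x.1 + Finsupp.weight β x.2 = Finsupp.weight β d := by
        rw [← map_add, (Finset.HasAntidiagonal.mem_antidiagonal.mp hx)]
      omega
  · rfl

theorem sum_wHC_of_le (β : σ → ℕ) {h : MvPolynomial σ K} {n : ℕ}
    (hh : ∀ d ∈ h.support, Finsupp.weight β d ≤ n) :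
    ∑ i ∈ Finset.range (n + 1), weightedHomogeneousComponent β i h = h := by
  classical
  ext d
  rw [coeff_sum]
  simp only [coeff_weightedHomogeneousComponent]
  rcases eq_or_ne (coeff d h) 0 with h0 | h0
  · simp [h0]
  · have hd : Finsupp.weight β d ≤ n := hh d (mem_support_iff.mpr h0)
    rw [Finset.sum_ite_eq (Finset.range (n+1)) _ (fun _ => coeff d h)]
    simp [Finset.mem_range, Nat.lt_succ_of_le hd]

theorem wHC_isWeightedHomogeneous_of (β : σ → ℕ) {γ : σ → ℕ} {h : MvPolynomial σ K} {n : ℕ}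
    (hh : h.IsWeightedHomogeneous γ n) (i : ℕ) :
    (weightedHomogeneousComponent β i h).IsWeightedHomogeneous γ n := by
  classical
  intro d hd
  rw [coeff_weightedHomogeneousComponent] at hd
  split_ifs at hd
  · exact hh hd
  · exact absurd rfl hd

theorem degree_eq_w1 {σ' : Type} (d : σ' →₀ ℕ) :
    d.degree = Finsupp.weight 1 d := by rw [Finsupp.degree_eq_weight_one]; rfl

theorem weight_le_degree (β : σ → ℕ) (hβ : ∀ e, β e ≤ 1) (d : σ →₀ ℕ) :
    Finsupp.weight β d ≤ d.degree := by
  rw [Finsupp.weight_apply, Finsupp.degree, Finsupp.sum]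
  refine Finset.sum_le_sum fun e _ => ?_
  calc d e • β e ≤ d e • 1 := Nat.mul_le_mul_left _ (hβ e)
  _ = d e := by simp

end WeightedComponents

section EdgeWeights

variable {V : Type}

/-- The weight vector of an edge: `𝐞ᵢ + 𝐞ⱼ + 𝐞ₛ`. -/
noncomputable def wE : Sym2 V → ((V ⊕ Unit) →₀ ℕ) :=
  Sym2.lift ⟨fun a b => Finsupp.single (inl a) 1 + Finsupp.single (inl b) 1 +
      Finsupp.single (inr ()) 1,
    fun a b => congrArg (· + Finsupp.single (inr ()) 1) (add_comm _ _)⟩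

@[simp] lemma wE_mk (a b : V) :
    wE s(a, b) = Finsupp.single (inl a) 1 + Finsupp.single (inl b) 1 +
      Finsupp.single (inr ()) 1 := rfl

lemma wE_inr (e : Sym2 V) : wE e (inr ()) = 1 := by
  induction e using Sym2.inductionOn with
  | hf a b => simp [Finsupp.single_apply]

open scoped Classical in
lemma wE_inl_apply (a b v : V) :
    wE s(a, b) (inl v) = (if a = v then 1 else 0) + (if b = v then 1 else 0) := by
  classical
  simp [Finsupp.single_apply]

lemma wE_inl_ne_zero_iff {e : Sym2 V} {v : V} : wE e (inl v) ≠ 0 ↔ v ∈ e := by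
  classical
  induction e using Sym2.inductionOn with
  | hf a b =>
    rw [wE_inl_apply, Sym2.mem_iff]
    by_cases ha : a = v <;> by_cases hb : b = v <;> simp [ha, hb, eq_comm] <;>
      exact ⟨fun h => ha h.symm, fun h => hb h.symm⟩

lemma wE_injective {e e' : Sym2 V} (h : wE e = wE e') : e = e' := by
  apply Sym2.ext
  intro x
  rw [← wE_inl_ne_zero_iff, ← wE_inl_ne_zero_iff, h]

variable {G : SimpleGraph V}

/-- The multidegree map on exponent vectors. -/
noncomputable def T (G : SimpleGraph V) : (G.edgeSet →₀ ℕ) →+ ((V ⊕ Unit) →₀ ℕ) :=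
  Finsupp.weight (fun e : G.edgeSet => wE (e : Sym2 V))

lemma T_apply (d : G.edgeSet →₀ ℕ) (x : V ⊕ Unit) :
    T G d x = ∑ e ∈ d.support, d e * wE (e : Sym2 V) x := by
  rw [T, Finsupp.weight_apply, Finsupp.sum, Finsupp.finset_sum_apply]
  exact Finset.sum_congr rfl fun e _ => by simp

lemma T_single (e : G.edgeSet) (n : ℕ) :
    T G (Finsupp.single e n) = n • wE (e : Sym2 V) := by
  rw [T, Finsupp.weight_apply, Finsupp.sum_single_index]
  simp

lemma T_inr (d : G.edgeSet →₀ ℕ) : T G d (inr ()) = d.degree := by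
  rw [T_apply, Finsupp.degree]
  exact Finset.sum_congr rfl fun e _ => by rw [wE_inr, mul_one]

variable (K : Type) [Field K]

lemma edgeRingHom_X (e : G.edgeSet) :
    edgeRingHom K G (X e) = monomial (wE (e : Sym2 V)) 1 := by
  rw [edgeRingHom, aeval_X]
  obtain ⟨e, he⟩ := e
  induction e using Sym2.inductionOn with
  | hf a b =>
    simp only [Sym2.lift_mk, wE_mk, X, monomial_mul, one_mul, mul_one]

lemma edgeRingHom_monomial (d : G.edgeSet →₀ ℕ) (c : K) :
    edgeRingHom K G (monomial d c) = monomial (T G d) c := by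
  induction d using Finsupp.induction with
  | zero => simp [monomial_zero', map_zero]
  | single_add e n d he hn ih =>
    have h1 : (monomial (Finsupp.single e n + d) c : MvPolynomial G.edgeSet K)
        = monomial (Finsupp.single e n) 1 * monomial d c := by
      rw [monomial_mul, one_mul]
    rw [h1, map_mul, ih, ← X_pow_eq_monomial, map_pow, edgeRingHom_X, monomial_pow,
      one_pow, monomial_mul, one_mul, map_add, T_single]

open scoped Classical in
lemma coeff_edgeRingHom_sum {ι : Type} (s : Finset ι) (m : ι → (G.edgeSet →₀ ℕ))
    (c : ι → K) (M : (V ⊕ Unit) →₀ ℕ) :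
    coeff M (edgeRingHom K G (∑ x ∈ s, monomial (m x) (c x)))
      = ∑ x ∈ s with T G (m x) = M, c x := by
  classical
  rw [map_sum, MvPolynomial.coeff_sum, Finset.sum_filter]
  exact Finset.sum_congr rfl fun x _ => by rw [edgeRingHom_monomial, coeff_monomial]

open scoped Classical in
/-- Class sums of coefficients of a kernel element vanish. -/
lemma class_sum_eq_zero {h : MvPolynomial G.edgeSet K} (hh : edgeRingHom K G h = 0)
    (M : (V ⊕ Unit) →₀ ℕ) :
    ∑ d ∈ h.support with T G d = M, coeff d h = 0 := by
  classical
  have := coeff_edgeRingHom_sum K h.support id (fun d => coeff d h) M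
  simp only [id] at this
  rw [support_sum_monomial_coeff, hh] at this
  simpa using this.symm

end EdgeWeights

section Split

variable {V : Type} {G : SimpleGraph V} {K : Type} [Field K]

lemma sym2_exists_pair (z : Sym2 V) : ∃ a b : V, z = s(a, b) :=
  Sym2.inductionOn z (fun a b => ⟨a, b, rfl⟩)

open scoped Classical in
/-- weight `1` on edges inside `U`, `0` elsewhere. -/
noncomputable def alphaW (G : SimpleGraph V) (U : Set V) : G.edgeSet → ℕ :=
  fun e => if ∀ v ∈ (e : Sym2 V), v ∈ U then 1 else 0

lemma alphaW_le_one (U : Set V) (e : G.edgeSet) : alphaW G U e ≤ 1 := by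
  rw [alphaW]; split <;> omega

lemma alphaW_eq_one {U : Set V} {e : G.edgeSet} (h : alphaW G U e = 1) :
    ∀ v ∈ (e : Sym2 V), v ∈ U := by
  rw [alphaW] at h
  by_contra hc
  rw [if_neg hc] at h
  omega

lemma alphaW_eq_one_of {U : Set V} {e : G.edgeSet} (h : ∀ v ∈ (e : Sym2 V), v ∈ U) :
    alphaW G U e = 1 := by
  rw [alphaW, if_pos h]

/-- for a closed set `U`, an edge is inside `U` or inside `Uᶜ`. -/
lemma edge_dichotomy {U : Set V} (hU : ∀ a b, G.Adj a b → (a ∈ U ↔ b ∈ U)) (e : G.edgeSet) :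
    (∀ v ∈ (e : Sym2 V), v ∈ U) ∨ (∀ v ∈ (e : Sym2 V), v ∉ U) := by
  obtain ⟨e, he⟩ := e
  induction e using Sym2.inductionOn with
  | hf a b =>
    rw [SimpleGraph.mem_edgeSet] at he
    have hiff := hU a b he
    by_cases ha : a ∈ U
    · left; intro v hv
      rcases Sym2.mem_iff.mp hv with rfl | rfl
      · exact ha
      · exact hiff.mp ha
    · right; intro v hv hvU
      rcases Sym2.mem_iff.mp hv with rfl | rfl
      · exact ha hvU
      · exact ha (hiff.mpr hvU)

lemma compl_closed {U : Set V} (hU : ∀ a b, G.Adj a b → (a ∈ U ↔ b ∈ U)) :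
    ∀ a b, G.Adj a b → (a ∈ Uᶜ ↔ b ∈ Uᶜ) := by
  intro a b hab
  simp only [Set.mem_compl_iff, hU a b hab]

lemma alphaW_add_compl {U : Set V} (hU : ∀ a b, G.Adj a b → (a ∈ U ↔ b ∈ U)) (e : G.edgeSet) :
    alphaW G U e + alphaW G Uᶜ e = 1 := by
  obtain ha | hb := edge_dichotomy hU e
  · rw [alphaW_eq_one_of ha]
    have : alphaW G Uᶜ e = 0 := by
      rw [alphaW, if_neg]
      intro hc
      obtain ⟨a, b, hab⟩ := sym2_exists_pair (e : Sym2 V)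
      have haa : a ∈ (e : Sym2 V) := by rw [hab]; simp
      exact (hc a haa) (ha a haa)
    omega
  · have h1 : alphaW G Uᶜ e = 1 := alphaW_eq_one_of (fun v hv => hb v hv)
    have h0 : alphaW G U e = 0 := by
      rw [alphaW, if_neg]
      intro hc
      obtain ⟨a, b, hab⟩ := sym2_exists_pair (e : Sym2 V)
      have haa : a ∈ (e : Sym2 V) := by rw [hab]; simp
      exact hb a haa (hc a haa)
    omega

lemma weight_split_add {U : Set V} (hU : ∀ a b, G.Adj a b → (a ∈ U ↔ b ∈ U))
    (d : G.edgeSet →₀ ℕ) :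
    Finsupp.weight (alphaW G U) d + Finsupp.weight (alphaW G Uᶜ) d = d.degree := by
  rw [Finsupp.weight_apply, Finsupp.weight_apply, Finsupp.degree, Finsupp.sum, Finsupp.sum,
    ← Finset.sum_add_distrib]
  refine Finset.sum_congr rfl fun e _ => ?_
  rw [smul_eq_mul, smul_eq_mul, ← mul_add, alphaW_add_compl hU e, mul_one]

open scoped Classical in
lemma sum_wE_inl [Fintype V] {U : Set V} (hU : ∀ a b, G.Adj a b → (a ∈ U ↔ b ∈ U))
    (e : G.edgeSet) :
    ∑ v ∈ Finset.univ.filter (fun v => v ∈ U), wE (e : Sym2 V) (inl v)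
      = 2 * alphaW G U e := by
  obtain ⟨a, b, hab⟩ := sym2_exists_pair (e : Sym2 V)
  have hsum : ∑ v ∈ Finset.univ.filter (fun v => v ∈ U), wE (e : Sym2 V) (inl v)
      = (if a ∈ U then 1 else 0) + (if b ∈ U then 1 else 0) := by
    rw [hab]
    simp only [wE_inl_apply]
    rw [Finset.sum_add_distrib,
      Finset.sum_ite_eq (Finset.univ.filter (fun v => v ∈ U)) a (fun _ => 1),
      Finset.sum_ite_eq (Finset.univ.filter (fun v => v ∈ U)) b (fun _ => 1)]
    simp only [Finset.mem_filter, Finset.mem_univ, true_and]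
  obtain ha | hb := edge_dichotomy hU e
  · have haU : a ∈ U := ha a (by rw [hab]; simp)
    have hbU : b ∈ U := ha b (by rw [hab]; simp)
    rw [hsum, if_pos haU, if_pos hbU, alphaW_eq_one_of ha]
  · have haU : a ∉ U := hb a (by rw [hab]; simp)
    have hbU : b ∉ U := hb b (by rw [hab]; simp)
    have h0 : alphaW G U e = 0 := by
      rw [alphaW, if_neg]
      intro hc
      exact haU (hc a (by rw [hab]; simp))
    rw [hsum, if_neg haU, if_neg hbU, h0]

open scoped Classical in
/-- the sum of `T d` over the `inl`-coordinates in `U` is twice the `αU`-weight. -/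
lemma sum_T_inl [Fintype V] {U : Set V} (hU : ∀ a b, G.Adj a b → (a ∈ U ↔ b ∈ U))
    (d : G.edgeSet →₀ ℕ) :
    ∑ v ∈ Finset.univ.filter (fun v => v ∈ U), T G d (inl v)
      = 2 * Finsupp.weight (alphaW G U) d := by
  calc ∑ v ∈ Finset.univ.filter (fun v => v ∈ U), T G d (inl v)
      = ∑ v ∈ Finset.univ.filter (fun v => v ∈ U), ∑ e ∈ d.support,
          d e * wE (e : Sym2 V) (inl v) :=
        Finset.sum_congr rfl fun v _ => T_apply d (inl v)
    _ = ∑ e ∈ d.support, ∑ v ∈ Finset.univ.filter (fun v => v ∈ U),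
          d e * wE (e : Sym2 V) (inl v) := Finset.sum_comm
    _ = ∑ e ∈ d.support, d e * (2 * alphaW G U e) := by
        refine Finset.sum_congr rfl fun e _ => ?_
        rw [← Finset.mul_sum, sum_wE_inl hU]
    _ = 2 * Finsupp.weight (alphaW G U) d := by
        rw [Finsupp.weight_apply, Finsupp.sum, Finset.mul_sum]
        refine Finset.sum_congr rfl fun e _ => ?_
        simp only [smul_eq_mul]
        ring

open scoped Classical in
/-- the part of an exponent vector supported on edges inside `U`. -/
noncomputable def partA (U : Set V) (d : G.edgeSet →₀ ℕ) : G.edgeSet →₀ ℕ :=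
  d.filter (fun e => alphaW G U e = 1)

open scoped Classical in
/-- the part of an exponent vector supported on edges not inside `U`. -/
noncomputable def partB (U : Set V) (d : G.edgeSet →₀ ℕ) : G.edgeSet →₀ ℕ :=
  d.filter (fun e => ¬ alphaW G U e = 1)

lemma partA_add_partB (U : Set V) (d : G.edgeSet →₀ ℕ) : partA U d + partB U d = d := by
  classical
  exact Finsupp.filter_pos_add_filter_neg d _

lemma partA_support {U : Set V} {d : G.edgeSet →₀ ℕ} {e : G.edgeSet}
    (he : e ∈ (partA U d).support) : alphaW G U e = 1 := by
  classical
  by_contra hc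
  rw [Finsupp.mem_support_iff, partA, Finsupp.filter_apply, if_neg hc] at he
  exact he rfl

lemma partB_support {U : Set V} {d : G.edgeSet →₀ ℕ} {e : G.edgeSet}
    (he : e ∈ (partB U d).support) : alphaW G U e = 0 := by
  classical
  by_contra hc
  have h1 : alphaW G U e = 1 := by have := alphaW_le_one (G := G) U e; omega
  rw [Finsupp.mem_support_iff, partB, Finsupp.filter_apply, if_neg (by simp [h1])] at he
  exact he rfl

lemma T_partA_inl_of_not_mem {U : Set V} {d : G.edgeSet →₀ ℕ} {v : V} (hv : v ∉ U) :
    T G (partA U d) (inl v) = 0 := by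
  rw [T_apply]
  refine Finset.sum_eq_zero fun e he => ?_
  have h1 := alphaW_eq_one (partA_support he)
  have : wE (e : Sym2 V) (inl v) = 0 := by
    by_contra hc
    exact hv (h1 v (wE_inl_ne_zero_iff.mp hc))
  rw [this, mul_zero]

lemma T_partB_inl_of_mem {U : Set V} (hU : ∀ a b, G.Adj a b → (a ∈ U ↔ b ∈ U))
    {d : G.edgeSet →₀ ℕ} {v : V} (hv : v ∈ U) :
    T G (partB U d) (inl v) = 0 := by
  rw [T_apply]
  refine Finset.sum_eq_zero fun e he => ?_
  have h0 := partB_support he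
  have hout : ∀ w ∈ (e : Sym2 V), w ∉ U := by
    rcases edge_dichotomy hU e with hin | hout
    · rw [alphaW_eq_one_of hin] at h0; omega
    · exact hout
  have : wE (e : Sym2 V) (inl v) = 0 := by
    by_contra hc
    exact hout v (wE_inl_ne_zero_iff.mp hc) hv
  rw [this, mul_zero]

lemma degree_partA (U : Set V) (d : G.edgeSet →₀ ℕ) :
    (partA U d).degree = Finsupp.weight (alphaW G U) d := by
  classical
  have hsub : (partA U d).support ⊆ d.support := by
    intro e he
    rw [Finsupp.mem_support_iff] at he ⊢
    intro h0
    apply he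
    rw [partA, Finsupp.filter_apply]
    split <;> simp [h0]
  rw [Finsupp.degree_apply, Finsupp.weight_apply, Finsupp.sum,
    Finset.sum_subset hsub (fun e _ he => Finsupp.notMem_support_iff.mp he)]
  refine Finset.sum_congr rfl fun e _ => ?_
  by_cases h1 : alphaW G U e = 1
  · rw [partA, Finsupp.filter_apply, if_pos h1, h1, smul_eq_mul, mul_one]
  · have h0 : alphaW G U e = 0 := by have := alphaW_le_one (G := G) U e; omega
    rw [partA, Finsupp.filter_apply, if_neg h1, h0, smul_eq_mul, mul_zero]

/-- the `T`-images of the two parts of `d` are determined by `T d`. -/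
lemma T_split_det [Fintype V] {U : Set V} (hU : ∀ a b, G.Adj a b → (a ∈ U ↔ b ∈ U))
    {d d' : G.edgeSet →₀ ℕ} (h : T G d = T G d') :
    T G (partA U d) = T G (partA U d') ∧ T G (partB U d) = T G (partB U d') := by
  classical
  have hw : Finsupp.weight (alphaW G U) d = Finsupp.weight (alphaW G U) d' := by
    have h1 := sum_T_inl hU (G := G) d
    have h2 := sum_T_inl hU (G := G) d'
    rw [h] at h1
    omega
  have hsplit : ∀ x : G.edgeSet →₀ ℕ, T G (partA U x) + T G (partB U x) = T G x := by
    intro x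
    rw [← map_add, partA_add_partB]
  have hA : T G (partA U d) = T G (partA U d') := by
    ext x
    cases x with
    | inl v =>
      by_cases hv : v ∈ U
      · have e1 : T G (partA U d) (inl v) + T G (partB U d) (inl v) = T G d (inl v) := by
          rw [← Finsupp.add_apply, hsplit]
        have e2 : T G (partA U d') (inl v) + T G (partB U d') (inl v) = T G d' (inl v) := by
          rw [← Finsupp.add_apply, hsplit]
        rw [T_partB_inl_of_mem hU hv] at e1 e2
        rw [h] at e1
        omega
      · rw [T_partA_inl_of_not_mem hv, T_partA_inl_of_not_mem hv]
    | inr u =>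
      cases u
      rw [T_inr, T_inr, degree_partA, degree_partA, hw]
  refine ⟨hA, ?_⟩
  have e1 := hsplit d
  have e2 := hsplit d'
  rw [h, hA] at e1
  rw [← e2] at e1
  exact add_left_cancel e1

end Split

section Kernel

variable {V : Type} {G : SimpleGraph V} {K : Type} [Field K]

lemma T_part_add (U : Set V) (x : G.edgeSet →₀ ℕ) :
    T G (partA U x) + T G (partB U x) = T G x := by
  rw [← map_add, partA_add_partB]

open scoped Classical in
lemma ker_of_class_sums {h : MvPolynomial G.edgeSet K}
    (hyp : ∀ M, ∑ d ∈ h.support with T G d = M, coeff d h = 0) :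
    edgeRingHom K G h = 0 := by
  have hrep := support_sum_monomial_coeff h
  rw [← hrep]
  refine MvPolynomial.ext _ _ fun M => ?_
  rw [coeff_edgeRingHom_sum, coeff_zero]
  exact hyp M

open scoped Classical in
lemma wHC_ker (β : G.edgeSet → ℕ)
    (hstab : ∀ d d' : G.edgeSet →₀ ℕ, T G d = T G d' →
      Finsupp.weight β d = Finsupp.weight β d')
    {h : MvPolynomial G.edgeSet K} (hh : edgeRingHom K G h = 0) (i : ℕ) :
    edgeRingHom K G (weightedHomogeneousComponent β i h) = 0 := by
  classical
  set h' := weightedHomogeneousComponent β i h with hh'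
  have hco : ∀ d, coeff d h' = if Finsupp.weight β d = i then coeff d h else 0 := fun d => by
    rw [hh', coeff_weightedHomogeneousComponent]
  apply ker_of_class_sums
  intro M
  have hsubf : {d ∈ h'.support | T G d = M} ⊆ {d ∈ h.support | T G d = M} := by
    intro d hd
    rw [Finset.mem_filter] at hd ⊢
    refine ⟨?_, hd.2⟩
    have hne := MvPolynomial.mem_support_iff.mp hd.1
    rw [hco d] at hne
    rw [MvPolynomial.mem_support_iff]
    by_cases hw : Finsupp.weight β d = i
    · rwa [if_pos hw] at hne
    · rw [if_neg hw] at hne; exact absurd rfl hne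
  rw [Finset.sum_subset hsubf (fun d _ hnd => by
    rcases eq_or_ne (coeff d h') 0 with h0 | h0
    · exact h0
    · exact absurd (Finset.mem_filter.mpr
        ⟨MvPolynomial.mem_support_iff.mpr h0,
         (Finset.mem_filter.mp ‹d ∈ {d ∈ h.support | T G d = M}›).2⟩) hnd)]
  by_cases hex : ∃ d₀ ∈ {d ∈ h.support | T G d = M}, Finsupp.weight β d₀ = i
  · obtain ⟨d₀, hd₀, hw₀⟩ := hex
    rw [Finset.sum_congr rfl (fun d hd => by
      rw [hco d, if_pos]
      rw [Finset.mem_filter] at hd hd₀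
      rw [hstab d d₀ (hd.2.trans hd₀.2.symm), hw₀])]
    exact class_sum_eq_zero K hh M
  · push_neg at hex
    exact Finset.sum_eq_zero fun d hd => by rw [hco d, if_neg (hex d hd)]

lemma stab_one : ∀ d d' : G.edgeSet →₀ ℕ, T G d = T G d' →
    Finsupp.weight (1 : G.edgeSet → ℕ) d = Finsupp.weight 1 d' := by
  intro d d' h
  rw [← degree_eq_w1, ← degree_eq_w1, ← T_inr (G := G) d, ← T_inr (G := G) d', h]

lemma stab_alpha [Fintype V] {U : Set V} (hU : ∀ a b, G.Adj a b → (a ∈ U ↔ b ∈ U)) :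
    ∀ d d' : G.edgeSet →₀ ℕ, T G d = T G d' →
      Finsupp.weight (alphaW G U) d = Finsupp.weight (alphaW G U) d' := by
  intro d d' h
  have h1 := sum_T_inl hU (G := G) d
  have h2 := sum_T_inl hU (G := G) d'
  rw [h] at h1
  omega

lemma finsupp_degree_single {σ : Type} (e : σ) (m : ℕ) :
    (Finsupp.single e m).degree = m := by
  classical
  rcases eq_or_ne m 0 with rfl | hm
  · simp [Finsupp.degree]
  · rw [Finsupp.degree_apply, Finsupp.support_single_ne_zero _ hm, Finset.sum_singleton,
      Finsupp.single_eq_same]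

lemma degree_one_single {σ : Type} {d : σ →₀ ℕ} (hd : d.degree = 1) :
    ∃ e, d = Finsupp.single e 1 := by
  classical
  have hdne : d ≠ 0 := fun h0 => by simp [h0, Finsupp.degree] at hd
  obtain ⟨e, he⟩ := Finsupp.support_nonempty_iff.mpr hdne
  have hcard : d.support.card ≤ 1 := by
    have : d.support.card ≤ ∑ a ∈ d.support, d a := by
      rw [Finset.card_eq_sum_ones]
      exact Finset.sum_le_sum fun a ha =>
        Nat.one_le_iff_ne_zero.mpr (Finsupp.mem_support_iff.mp ha)
    rw [Finsupp.degree_apply] at hd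
    omega
  have hone : d.support = {e} := by
    have h1 : 1 ≤ d.support.card := Finset.card_pos.mpr ⟨e, he⟩
    have := Finset.card_eq_one.mp (le_antisymm hcard h1)
    obtain ⟨a, ha⟩ := this
    rw [ha] at he ⊢
    rw [Finset.mem_singleton] at he
    rw [he]
  obtain ⟨_, hsingle⟩ := Finsupp.support_eq_singleton.mp hone
  refine ⟨e, ?_⟩
  have hde : d e = 1 := by
    have := hd
    rw [hsingle, finsupp_degree_single] at this
    exact this
  rw [hsingle, hde]

lemma low_degree_ker {h : MvPolynomial G.edgeSet K} (hh : edgeRingHom K G h = 0)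
    {n : ℕ} (hn : h.IsHomogeneous n) (hn1 : n ≤ 1) : h = 0 := by
  classical
  by_contra hne
  obtain ⟨d₀, hd₀⟩ := MvPolynomial.ne_zero_iff.mp hne
  have hdeg : ∀ d, coeff d h ≠ 0 → d.degree = n := fun d hd => by
    rw [degree_eq_w1]; exact hn hd
  have hclass : ∀ d, coeff d h ≠ 0 → T G d = T G d₀ → d = d₀ := by
    intro d hd hT
    interval_cases n
    · have h1 := Finsupp.degree_eq_zero_iff d |>.mp (hdeg d hd)
      have h2 := Finsupp.degree_eq_zero_iff d₀ |>.mp (hdeg d₀ hd₀)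
      rw [h1, h2]
    · obtain ⟨e, rfl⟩ := degree_one_single (hdeg d hd)
      obtain ⟨e₀, rfl⟩ := degree_one_single (hdeg d₀ hd₀)
      rw [T_single, T_single, one_smul, one_smul] at hT
      have := wE_injective hT
      rw [Subtype.ext this]
  have hsum := class_sum_eq_zero K hh (T G d₀)
  have hset : {d ∈ h.support | T G d = T G d₀} = {d₀} := by
    ext d
    rw [Finset.mem_filter, Finset.mem_singleton, MvPolynomial.mem_support_iff]
    constructor
    · rintro ⟨hd, hT⟩
      exact hclass d hd hT
    · rintro rfl
      exact ⟨hd₀, rfl⟩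
  rw [hset, Finset.sum_singleton] at hsum
  exact hd₀ hsum

open scoped Classical in
/-- The key combinatorial lemma: a kernel element which is homogeneous and whose
`U`-part and `Uᶜ`-part both have degree `< q` must vanish. -/
lemma mixed_kill [Fintype V] {U : Set V} (hU : ∀ a b, G.Adj a b → (a ∈ U ↔ b ∈ U))
    {q : ℕ}
    (hmin : ∀ z : MvPolynomial G.edgeSet K, edgeRingHom K G z = 0 →
      ∀ m : ℕ, z.IsHomogeneous m → z ≠ 0 → q ≤ m)
    {h : MvPolynomial G.edgeSet K} {n k : ℕ}
    (hker : edgeRingHom K G h = 0) (hn : h.IsHomogeneous n)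
    (hk : h.IsWeightedHomogeneous (alphaW G U) k)
    (hkq : k < q) (hk2 : n - k < q) : h = 0 := by
  classical
  by_contra hne
  obtain ⟨d₀, hd₀⟩ := MvPolynomial.ne_zero_iff.mp hne
  have hd₀s : d₀ ∈ h.support := MvPolynomial.mem_support_iff.mpr hd₀
  set s : Finset (G.edgeSet →₀ ℕ) :=
    {d ∈ h.support | T G (partB U d) = T G (partB U d₀)} with hs
  have hdegA : ∀ d ∈ h.support, (partA U d).degree = k := by
    intro d hd
    rw [degree_partA]
    exact hk (MvPolynomial.mem_support_iff.mp hd)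
  have hdegB : ∀ d ∈ h.support, (partB U d).degree = n - k := by
    intro d hd
    have h1 : (partA U d).degree + (partB U d).degree = d.degree := by
      rw [degree_eq_w1, degree_eq_w1, degree_eq_w1, ← map_add, partA_add_partB]
    have h2 : d.degree = n := by
      rw [degree_eq_w1]
      exact hn (MvPolynomial.mem_support_iff.mp hd)
    have h3 := hdegA d hd
    omega
  set z : MvPolynomial G.edgeSet K := ∑ d ∈ s, monomial (partA U d) (coeff d h) with hz
  have hzker : edgeRingHom K G z = 0 := by
    refine MvPolynomial.ext _ _ fun M => ?_
    rw [hz, coeff_edgeRingHom_sum, coeff_zero]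
    rcases Finset.eq_empty_or_nonempty {x ∈ s | T G (partA U x) = M} with hemp | ⟨dst, hdst⟩
    · rw [hemp, Finset.sum_empty]
    · have hdst' := Finset.mem_filter.mp hdst
      have hdsts := Finset.mem_filter.mp hdst'.1
      have hset : {x ∈ s | T G (partA U x) = M} = {d ∈ h.support | T G d = T G dst} := by
        ext d
        simp only [Finset.mem_filter, hs]
        constructor
        · rintro ⟨⟨hds, hdB⟩, hdA⟩
          refine ⟨hds, ?_⟩
          rw [← T_part_add U d, ← T_part_add U dst, hdA, hdB, hdsts.2, hdst'.2]
        · rintro ⟨hds, hdT⟩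
          obtain ⟨hA, hB⟩ := T_split_det hU hdT
          exact ⟨⟨hds, hB.trans hdsts.2⟩, hA.trans hdst'.2⟩
      rw [hset]
      exact class_sum_eq_zero K hker _
  have hzhom : z.IsHomogeneous k := by
    have : z ∈ homogeneousSubmodule _ K k := by
      rw [hz]
      refine Submodule.sum_mem _ fun d hd => ?_
      rw [mem_homogeneousSubmodule]
      exact isHomogeneous_monomial _ (hdegA d (Finset.mem_filter.mp hd).1)
    rwa [mem_homogeneousSubmodule] at this
  have hz0 : z = 0 := by
    by_contra hzne
    exact absurd (hmin z hzker k hzhom hzne) (by omega)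
  have hcoeff : ∑ d ∈ {d ∈ s | partA U d = partA U d₀}, coeff d h = 0 := by
    have hc := congrArg (coeff (partA U d₀)) hz0
    rw [hz, MvPolynomial.coeff_sum, coeff_zero] at hc
    rw [Finset.sum_filter]
    calc ∑ d ∈ s, (if partA U d = partA U d₀ then coeff d h else 0)
        = ∑ d ∈ s, coeff (partA U d₀) (monomial (partA U d) (coeff d h)) := by
          refine Finset.sum_congr rfl fun d _ => ?_
          rw [coeff_monomial]
      _ = 0 := hc
  have hd₀mem : d₀ ∈ {d ∈ s | partA U d = partA U d₀} := by
    refine Finset.mem_filter.mpr ⟨?_, rfl⟩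
    rw [hs]
    exact Finset.mem_filter.mpr ⟨hd₀s, rfl⟩
  obtain ⟨d₁, hd₁mem, hd₁ne⟩ : ∃ d₁ ∈ {d ∈ s | partA U d = partA U d₀}, d₁ ≠ d₀ := by
    by_contra hcon
    push_neg at hcon
    have : {d ∈ s | partA U d = partA U d₀} = {d₀} := by
      ext d
      rw [Finset.mem_singleton]
      exact ⟨fun hd => hcon d hd, fun hd => hd ▸ hd₀mem⟩
    rw [this, Finset.sum_singleton] at hcoeff
    exact hd₀ hcoeff
  have hd₁' := Finset.mem_filter.mp hd₁mem
  have hd₁s' := Finset.mem_filter.mp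
    (show d₁ ∈ {d ∈ h.support | T G (partB U d) = T G (partB U d₀)} by rw [← hs]; exact hd₁'.1)
  have hd₁s : d₁ ∈ h.support := hd₁s'.1
  have hd₁B : T G (partB U d₁) = T G (partB U d₀) := hd₁s'.2
  have hd₁A : partA U d₁ = partA U d₀ := hd₁'.2
  have hBne : partB U d₁ ≠ partB U d₀ := by
    intro hBeq
    apply hd₁ne
    calc d₁ = partA U d₁ + partB U d₁ := (partA_add_partB U d₁).symm
    _ = partA U d₀ + partB U d₀ := by rw [hd₁A, hBeq]
    _ = d₀ := partA_add_partB U d₀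
  set y : MvPolynomial G.edgeSet K :=
    monomial (partB U d₁) 1 - monomial (partB U d₀) 1 with hy
  have hyker : edgeRingHom K G y = 0 := by
    rw [hy, map_sub, edgeRingHom_monomial, edgeRingHom_monomial, hd₁B, sub_self]
  have hyne : y ≠ 0 := by
    intro h0
    have hcy := congrArg (coeff (partB U d₁)) h0
    rw [hy, MvPolynomial.coeff_sub, coeff_monomial, coeff_monomial, if_pos rfl,
      if_neg (fun hh => hBne hh.symm), coeff_zero, sub_zero] at hcy
    exact one_ne_zero hcy
  have hyhom : y.IsHomogeneous (n - k) := by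
    have h1 : (monomial (partB U d₁) (1 : K)).IsHomogeneous (n - k) :=
      isHomogeneous_monomial _ (hdegB d₁ hd₁s)
    have h2 : (monomial (partB U d₀) (1 : K)).IsHomogeneous (n - k) :=
      isHomogeneous_monomial _ (hdegB d₀ hd₀s)
    exact h1.sub h2
  exact absurd (hmin y hyker (n - k) hyhom hyne) (by omega)

end Kernel


section Purity

variable {V : Type} {G : SimpleGraph V} {K : Type} [Field K]

lemma pure_weight_of {U : Set V} {h : MvPolynomial G.edgeSet K} {n : ℕ}
    (hhom : h.IsHomogeneous n)
    (hsupp : ∀ d ∈ h.support, ∀ e ∈ d.support, alphaW G U e = 1) :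
    h.IsWeightedHomogeneous (alphaW G U) n := by
  intro d hd
  have hds : d ∈ h.support := MvPolynomial.mem_support_iff.mpr hd
  have hw : Finsupp.weight (alphaW G U) d = d.degree := by
    rw [Finsupp.weight_apply, Finsupp.degree, Finsupp.sum]
    refine Finset.sum_congr rfl fun e he => ?_
    rw [hsupp d hds e he, smul_eq_mul, mul_one]
  rw [hw, degree_eq_w1]
  exact hhom hd

lemma pure_weight_zero {U : Set V} {h : MvPolynomial G.edgeSet K}
    (hsupp : ∀ d ∈ h.support, ∀ e ∈ d.support, alphaW G U e = 0) :
    h.IsWeightedHomogeneous (alphaW G U) 0 := by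
  intro d hd
  have hds : d ∈ h.support := MvPolynomial.mem_support_iff.mpr hd
  rw [Finsupp.weight_apply, Finsupp.sum]
  refine Finset.sum_eq_zero fun e he => ?_
  rw [hsupp d hds e he, smul_eq_mul, mul_zero]

lemma weight_flip {U : Set V} (hU : ∀ a b, G.Adj a b → (a ∈ U ↔ b ∈ U))
    {h : MvPolynomial G.edgeSet K} {n k : ℕ}
    (hhom : h.IsHomogeneous n) (hA : h.IsWeightedHomogeneous (alphaW G U) k) :
    h.IsWeightedHomogeneous (alphaW G Uᶜ) (n - k) := by
  intro d hd
  have h1 := weight_split_add hU d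
  have h2 : d.degree = n := by rw [degree_eq_w1]; exact hhom hd
  have h3 := hA hd
  omega

end Purity

section Embed

variable {V : Type} {G : SimpleGraph V} (K : Type) [Field K]

lemma exists_pure_elem (c : G.ConnectedComponent)
    (hc : toricIdeal K (G.induce c.supp) ≠ ⊥) :
    ∃ (h : MvPolynomial G.edgeSet K) (n : ℕ), edgeRingHom K G h = 0 ∧ h ≠ 0 ∧
      h.IsHomogeneous n ∧
      ∀ d ∈ h.support, ∀ e ∈ d.support, ∀ v ∈ (e : Sym2 V), v ∈ c.supp := by
  classical
  obtain ⟨p, hpmem, hp0⟩ := (Submodule.ne_bot_iff _).mp hc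
  have hpker : edgeRingHom K (G.induce c.supp) p = 0 := by
    rw [toricIdeal] at hpmem
    exact hpmem
  have hmapmem : ∀ e : (G.induce c.supp).edgeSet,
      Sym2.map (Subtype.val) (e : Sym2 c.supp) ∈ G.edgeSet := by
    intro e
    obtain ⟨a, b, hab⟩ := sym2_exists_pair (e : Sym2 c.supp)
    have he := e.2
    rw [hab] at he ⊢
    rw [Sym2.map_pair_eq, SimpleGraph.mem_edgeSet]
    rw [SimpleGraph.mem_edgeSet] at he
    exact he
  set ι : (G.induce c.supp).edgeSet → G.edgeSet :=
    fun e => ⟨Sym2.map Subtype.val (e : Sym2 c.supp), hmapmem e⟩ with hι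
  have hinj : Function.Injective ι := by
    intro e e' hee
    have h1 := congrArg Subtype.val hee
    exact Subtype.ext (Sym2.map.injective Subtype.val_injective h1)
  have hcomm : ∀ r : MvPolynomial (G.induce c.supp).edgeSet K,
      edgeRingHom K G (rename ι r)
        = rename (Sum.map (Subtype.val) id) (edgeRingHom K (G.induce c.supp) r) := by
    intro r
    have hext : (edgeRingHom K G).comp (rename ι)
        = (rename (Sum.map (Subtype.val) id)).comp (edgeRingHom K (G.induce c.supp)) := by
      apply MvPolynomial.algHom_ext
      intro e
      rw [AlgHom.comp_apply, AlgHom.comp_apply, rename_X, edgeRingHom_X, edgeRingHom_X,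
        rename_monomial]
      congr 1
      obtain ⟨a, b, hab⟩ := sym2_exists_pair (e : Sym2 c.supp)
      have hval : ((ι e : G.edgeSet) : Sym2 V) = Sym2.map Subtype.val (e : Sym2 c.supp) := rfl
      rw [hval, hab, Sym2.map_pair_eq, wE_mk, wE_mk, Finsupp.mapDomain_add,
        Finsupp.mapDomain_add, Finsupp.mapDomain_single, Finsupp.mapDomain_single,
        Finsupp.mapDomain_single]
      rfl
    exact DFunLike.congr_fun hext r
  set h' : MvPolynomial G.edgeSet K := rename ι p with hh'
  have hker' : edgeRingHom K G h' = 0 := by rw [hh', hcomm, hpker, map_zero]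
  have hne' : h' ≠ 0 := by
    intro h0
    exact hp0 (MvPolynomial.rename_injective ι hinj (by rw [← hh', h0, map_zero]))
  have hsupp' : ∀ d ∈ h'.support, ∀ e ∈ d.support, ∀ v ∈ (e : Sym2 V), v ∈ c.supp := by
    intro d hd e he v hv
    obtain ⟨u, hu1, hu2⟩ := MvPolynomial.coeff_rename_ne_zero ι p d
      (MvPolynomial.mem_support_iff.mp hd)
    rw [← hu1] at he
    obtain ⟨e', _, rfl⟩ := Finset.mem_image.mp (Finsupp.mapDomain_support he)
    have hval : ((ι e' : G.edgeSet) : Sym2 V) = Sym2.map Subtype.val (e' : Sym2 c.supp) := rfl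
    rw [hval] at hv
    obtain ⟨w, _, rfl⟩ := Sym2.mem_map.mp hv
    exact w.2
  have hbound : ∀ d ∈ h'.support, Finsupp.weight (1 : G.edgeSet → ℕ) d ≤ h'.totalDegree := by
    intro d hd
    rw [← degree_eq_w1]
    have := MvPolynomial.le_totalDegree hd
    simpa [Finsupp.degree_apply, Finsupp.sum] using this
  obtain ⟨n, hcomp⟩ : ∃ n, weightedHomogeneousComponent 1 n h' ≠ 0 := by
    by_contra hcon
    push_neg at hcon
    apply hne'
    rw [← sum_wHC_of_le (1 : G.edgeSet → ℕ) hbound]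
    exact Finset.sum_eq_zero fun i _ => hcon i
  refine ⟨weightedHomogeneousComponent 1 n h', n, wHC_ker 1 stab_one hker' n, hcomp,
    weightedHomogeneousComponent_isWeightedHomogeneous n h', ?_⟩
  intro d hd e he v hv
  refine hsupp' d ?_ e he v hv
  rw [MvPolynomial.mem_support_iff] at hd ⊢
  rw [coeff_weightedHomogeneousComponent] at hd
  split_ifs at hd with hw
  · exact hd
  · exact absurd rfl hd

end Embed

section Resolution

variable {σ : Type} {K : Type} [Field K]

lemma finsupp_eq_sum_single {ι M : Type} [Fintype ι] [AddCommMonoid M] (P : ι →₀ M) :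
    P = ∑ b, Finsupp.single b (P b) := by
  classical
  ext a
  rw [Finsupp.finset_sum_apply]
  rw [Finset.sum_congr rfl fun b _ => Finsupp.single_apply]
  rw [Finset.sum_ite_eq' Finset.univ a (fun b => P b)]
  simp

lemma single_eq_smul {ι : Type} (b : ι) (s : MvPolynomial σ K) :
    Finsupp.single b s = s • Finsupp.single b (1 : MvPolynomial σ K) := by
  rw [Finsupp.smul_single, smul_eq_mul, mul_one]

variable {I : Ideal (MvPolynomial σ K)} (F : GradedFreeRes K I)

/-- the generators of `I` provided by the resolution. -/
noncomputable def gens (b : F.B 1) : MvPolynomial σ K := F.ε (Finsupp.single b 1)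

/-- the entries of the first syzygy matrix. -/
noncomputable def syz (c : F.B 2) (b : F.B 1) : MvPolynomial σ K :=
  (F.φ 0 (Finsupp.single c 1)) b

lemma eps_eq [Fintype (F.B 1)] (P : F.B 1 →₀ MvPolynomial σ K) :
    F.ε P = ∑ b, P b * gens F b := by
  conv_lhs => rw [finsupp_eq_sum_single P]
  rw [map_sum]
  refine Finset.sum_congr rfl fun b _ => ?_
  rw [single_eq_smul, map_smul, smul_eq_mul]
  rfl

lemma phi_coord [Fintype (F.B 2)] (u : F.B 2 →₀ MvPolynomial σ K) (b : F.B 1) :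
    (F.φ 0) u b = ∑ c, u c * syz F c b := by
  conv_lhs => rw [finsupp_eq_sum_single u]
  rw [map_sum, Finsupp.finset_sum_apply]
  refine Finset.sum_congr rfl fun c _ => ?_
  rw [single_eq_smul, map_smul, Finsupp.smul_apply, smul_eq_mul]
  rfl

lemma min_degree [Fintype (F.B 1)]
    {q : ℕ} (hq : ∀ b : F.B 1, (gens F b).IsHomogeneous q)
    {h : MvPolynomial σ K} (hmem : h ∈ I) {n : ℕ} (hhom : h.IsHomogeneous n)
    (hne : h ≠ 0) : q ≤ n := by
  by_contra hlt
  push_neg at hlt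
  rw [← F.range_ε] at hmem
  obtain ⟨P, hP⟩ := hmem
  apply hne
  have h1 : h = weightedHomogeneousComponent 1 n h :=
    (IsWeightedHomogeneous.weightedHomogeneousComponent_same hhom).symm
  rw [h1, ← hP, eps_eq, map_sum]
  exact Finset.sum_eq_zero fun b _ => wHC_mul_right_zero 1 (hq b) (P b) hlt

end Resolution

section Core

variable {V : Type} [Fintype V] {G : SimpleGraph V} {K : Type} [Field K]

lemma core_contradiction (F : GradedFreeRes K (toricIdeal K G))
    [Fintype (F.B 1)] [Fintype (F.B 2)]
    {q : ℕ} (hq2 : 2 ≤ q)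
    (hdeg1 : ∀ b : F.B 1, F.deg 1 b = q) (hdeg2 : ∀ c : F.B 2, F.deg 2 c = q + 1)
    {U : Set V} (hU : ∀ a b, G.Adj a b → (a ∈ U ↔ b ∈ U))
    {f gg : MvPolynomial G.edgeSet K} {n₂ : ℕ}
    (hfker : edgeRingHom K G f = 0) (hfne : f ≠ 0) (hfhom : f.IsHomogeneous q)
    (hfA : f.IsWeightedHomogeneous (alphaW G U) q)
    (hggker : edgeRingHom K G gg = 0) (hggne : gg ≠ 0) (hgghom : gg.IsHomogeneous n₂)
    (hggA : gg.IsWeightedHomogeneous (alphaW G U) 0) : False := by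
  classical
  set α := alphaW G U with hα
  have hghomb : ∀ b, (gens F b).IsHomogeneous q := fun b => by
    have := F.homog_ε b
    rwa [hdeg1 b] at this
  have hgmem : ∀ b, gens F b ∈ toricIdeal K G := fun b => by
    have hmem : gens F b ∈ LinearMap.range F.ε := ⟨Finsupp.single b 1, rfl⟩
    rwa [F.range_ε] at hmem
  have hgkerb : ∀ b, edgeRingHom K G (gens F b) = 0 := fun b => hgmem b
  have hmin : ∀ z : MvPolynomial G.edgeSet K, edgeRingHom K G z = 0 →
      ∀ m : ℕ, z.IsHomogeneous m → z ≠ 0 → q ≤ m := by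
    intro z hz m hzm hzne
    exact min_degree F hghomb (show z ∈ toricIdeal K G from hz) hzm hzne
  have hn₂q : q ≤ n₂ := hmin gg hggker n₂ hgghom hggne
  obtain ⟨P, hP⟩ : f ∈ LinearMap.range F.ε := by
    rw [F.range_ε]
    exact (show f ∈ toricIdeal K G from hfker)
  obtain ⟨R, hR⟩ : gg ∈ LinearMap.range F.ε := by
    rw [F.range_ε]
    exact (show gg ∈ toricIdeal K G from hggker)
  set pb : F.B 1 → MvPolynomial G.edgeSet K :=
    fun b => weightedHomogeneousComponent 1 0 (P b) with hpb
  set rb : F.B 1 → MvPolynomial G.edgeSet K :=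
    fun b => weightedHomogeneousComponent 1 (n₂ - q) (R b) with hrb
  have hfg : f = ∑ b, pb b * gens F b := by
    calc f = weightedHomogeneousComponent 1 q f :=
          (IsWeightedHomogeneous.weightedHomogeneousComponent_same hfhom).symm
    _ = weightedHomogeneousComponent 1 q (∑ b, P b * gens F b) := by rw [← eps_eq, hP]
    _ = ∑ b, weightedHomogeneousComponent 1 q (P b * gens F b) := map_sum _ _ _
    _ = ∑ b, pb b * gens F b := by
        refine Finset.sum_congr rfl fun b _ => ?_
        rw [wHC_mul_right 1 (hghomb b) (P b) le_rfl, Nat.sub_self]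
  have hgg : gg = ∑ b, rb b * gens F b := by
    calc gg = weightedHomogeneousComponent 1 n₂ gg :=
          (IsWeightedHomogeneous.weightedHomogeneousComponent_same hgghom).symm
    _ = weightedHomogeneousComponent 1 n₂ (∑ b, R b * gens F b) := by rw [← eps_eq, hR]
    _ = ∑ b, weightedHomogeneousComponent 1 n₂ (R b * gens F b) := map_sum _ _ _
    _ = ∑ b, rb b * gens F b := by
        refine Finset.sum_congr rfl fun b _ => ?_
        rw [wHC_mul_right 1 (hghomb b) (R b) hn₂q]
  have hpb0 : ∀ b, (pb b).IsWeightedHomogeneous α 0 := by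
    intro b d hd
    have h1 : Finsupp.weight (1 : G.edgeSet → ℕ) d = 0 :=
      weightedHomogeneousComponent_isWeightedHomogeneous 0 (P b) hd
    have h2 : d = 0 := by rwa [← degree_eq_w1, Finsupp.degree_eq_zero_iff] at h1
    rw [h2, map_zero]
  set v : F.B 1 →₀ MvPolynomial G.edgeSet K :=
    ∑ b, Finsupp.single b (gg * pb b - f * rb b) with hv
  have hεv : F.ε v = 0 := by
    rw [hv, map_sum]
    have hterm : ∀ b : F.B 1, F.ε (Finsupp.single b (gg * pb b - f * rb b))
        = (gg * pb b - f * rb b) * gens F b := by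
      intro b
      rw [single_eq_smul, map_smul, smul_eq_mul]
      rfl
    rw [Finset.sum_congr rfl fun b _ => hterm b]
    have hexp : ∑ b, (gg * pb b - f * rb b) * gens F b
        = gg * (∑ b, pb b * gens F b) - f * (∑ b, rb b * gens F b) := by
      rw [Finset.mul_sum, Finset.mul_sum, ← Finset.sum_sub_distrib]
      exact Finset.sum_congr rfl fun b _ => by ring
    rw [hexp, ← hfg, ← hgg, mul_comm]
    exact sub_self _
  obtain ⟨u, hu⟩ : v ∈ LinearMap.range (F.φ 0) := by
    rw [← F.exact_one]
    exact LinearMap.mem_ker.mpr hεv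
  have hℓhom : ∀ (c : F.B 2) (b : F.B 1), (syz F c b).IsHomogeneous 1 := by
    intro c b
    have := (F.homog_φ 0 c b).1
    rwa [hdeg1 b, hdeg2 c, show q + 1 - q = 1 by omega] at this
  have hℓg : ∀ c : F.B 2, ∑ b, syz F c b * gens F b = 0 := by
    intro c
    have h1 : F.ε (F.φ 0 (Finsupp.single c 1)) = 0 := by
      have h2 : F.φ 0 (Finsupp.single c 1) ∈ LinearMap.range (F.φ 0) := ⟨_, rfl⟩
      rw [← F.exact_one, LinearMap.mem_ker] at h2
      exact h2
    have h3 := eps_eq F (F.φ 0 (Finsupp.single c 1))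
    rw [h1] at h3
    exact h3.symm
  have hvb : ∀ b, gg * pb b - f * rb b = ∑ c, u c * syz F c b := by
    intro b
    have h1 : v b = gg * pb b - f * rb b := by
      rw [hv, Finsupp.finset_sum_apply]
      rw [Finset.sum_congr rfl fun b' _ => Finsupp.single_apply]
      rw [Finset.sum_ite_eq' Finset.univ b (fun b' => gg * pb b' - f * rb b')]
      simp
    rw [← h1, ← hu]
    exact phi_coord F u b
  have hℓsplit : ∀ (c : F.B 2) (b : F.B 1), syz F c b
      = weightedHomogeneousComponent α 0 (syz F c b)
        + weightedHomogeneousComponent α 1 (syz F c b) := by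
    intro c b
    have hb : ∀ d ∈ (syz F c b).support, Finsupp.weight α d ≤ 1 := by
      intro d hd
      calc Finsupp.weight α d ≤ d.degree := weight_le_degree _ (alphaW_le_one U) d
      _ = 1 := by
          rw [degree_eq_w1]
          exact hℓhom c b (MvPolynomial.mem_support_iff.mp hd)
    have h1 := sum_wHC_of_le α hb
    conv_lhs => rw [← h1]
    rw [Finset.sum_range_succ, Finset.sum_range_one]
  have hstep6 : ∀ b, gg * pb b = ∑ c, weightedHomogeneousComponent α 0 (u c)
      * weightedHomogeneousComponent α 0 (syz F c b) := by
    intro b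
    have happ := congrArg (weightedHomogeneousComponent α 0) (hvb b)
    have e1 : weightedHomogeneousComponent α 0 (gg * pb b) = gg * pb b := by
      apply IsWeightedHomogeneous.weightedHomogeneousComponent_same
      have := hggA.mul (hpb0 b)
      simpa using this
    have e2 : weightedHomogeneousComponent α 0 (f * rb b) = 0 := by
      rw [mul_comm]
      exact wHC_mul_right_zero α hfA (rb b) (by omega)
    rw [map_sub, e1, e2, sub_zero, map_sum] at happ
    rw [happ]
    refine Finset.sum_congr rfl fun c _ => ?_
    conv_lhs => rw [hℓsplit c b]
    rw [mul_add, map_add]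
    have e3 : weightedHomogeneousComponent α 0
        (u c * weightedHomogeneousComponent α 0 (syz F c b))
        = weightedHomogeneousComponent α 0 (u c)
          * weightedHomogeneousComponent α 0 (syz F c b) := by
      have := wHC_mul_right α
        (weightedHomogeneousComponent_isWeightedHomogeneous 0 (syz F c b)) (u c) le_rfl
      simpa using this
    have e4 : weightedHomogeneousComponent α 0
        (u c * weightedHomogeneousComponent α 1 (syz F c b)) = 0 :=
      wHC_mul_right_zero α
        (weightedHomogeneousComponent_isWeightedHomogeneous 1 (syz F c b)) (u c) zero_lt_one
    rw [e3, e4, add_zero]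
  have hstep7 : f * gg = - ∑ c, ∑ b, weightedHomogeneousComponent α 0 (u c)
      * weightedHomogeneousComponent α 1 (syz F c b) * gens F b := by
    have h1 : f * gg = ∑ b, gg * pb b * gens F b := by
      calc f * gg = gg * f := mul_comm _ _
      _ = gg * ∑ b, pb b * gens F b := by rw [← hfg]
      _ = ∑ b, gg * pb b * gens F b := by
          rw [Finset.mul_sum]
          exact Finset.sum_congr rfl fun b _ => (mul_assoc _ _ _).symm
    rw [h1, Finset.sum_congr rfl fun b _ => by rw [hstep6 b, Finset.sum_mul], Finset.sum_comm]
    have h2 : ∀ c : F.B 2, ∑ b, weightedHomogeneousComponent α 0 (u c)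
        * weightedHomogeneousComponent α 0 (syz F c b) * gens F b
        = - ∑ b, weightedHomogeneousComponent α 0 (u c)
          * weightedHomogeneousComponent α 1 (syz F c b) * gens F b := by
      intro c
      have h3 : (∑ b, weightedHomogeneousComponent α 0 (syz F c b) * gens F b)
          + ∑ b, weightedHomogeneousComponent α 1 (syz F c b) * gens F b = 0 := by
        rw [← Finset.sum_add_distrib]
        calc ∑ b, (weightedHomogeneousComponent α 0 (syz F c b) * gens F b
            + weightedHomogeneousComponent α 1 (syz F c b) * gens F b)
            = ∑ b, syz F c b * gens F b := by
              refine Finset.sum_congr rfl fun b _ => ?_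
              rw [← add_mul, ← hℓsplit c b]
        _ = 0 := hℓg c
      have h4 : ∑ b, weightedHomogeneousComponent α 0 (syz F c b) * gens F b
          = - ∑ b, weightedHomogeneousComponent α 1 (syz F c b) * gens F b :=
        eq_neg_of_add_eq_zero_left h3
      calc ∑ b, weightedHomogeneousComponent α 0 (u c)
          * weightedHomogeneousComponent α 0 (syz F c b) * gens F b
          = weightedHomogeneousComponent α 0 (u c)
            * ∑ b, weightedHomogeneousComponent α 0 (syz F c b) * gens F b := by
            rw [Finset.mul_sum]
            exact Finset.sum_congr rfl fun b _ => mul_assoc _ _ _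
      _ = weightedHomogeneousComponent α 0 (u c)
            * - ∑ b, weightedHomogeneousComponent α 1 (syz F c b) * gens F b := by rw [h4]
      _ = - ∑ b, weightedHomogeneousComponent α 0 (u c)
            * weightedHomogeneousComponent α 1 (syz F c b) * gens F b := by
            rw [mul_neg, Finset.mul_sum]
            congr 1
            exact Finset.sum_congr rfl fun b _ => (mul_assoc _ _ _).symm
    rw [Finset.sum_congr rfl fun c _ => h2 c]
    rw [Finset.sum_neg_distrib]
  have hwb : ∀ b : F.B 1,
      weightedHomogeneousComponent α (q - 1) (gens F b) = 0 := by
    intro b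
    refine mixed_kill hU hmin (wHC_ker α (stab_alpha hU) (hgkerb b) (q - 1))
      (wHC_isWeightedHomogeneous_of α (hghomb b) (q - 1))
      (weightedHomogeneousComponent_isWeightedHomogeneous (q - 1) (gens F b))
      (by omega) (by omega)
  have hfinal : f * gg = 0 := by
    have happ := congrArg (weightedHomogeneousComponent α q) hstep7
    have e1 : weightedHomogeneousComponent α q (f * gg) = f * gg := by
      apply IsWeightedHomogeneous.weightedHomogeneousComponent_same
      have := hfA.mul hggA
      simpa using this
    rw [e1, map_neg, map_sum] at happ
    rw [happ, Finset.sum_congr rfl (fun c _ => ?_), Finset.sum_const_zero, neg_zero]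
    rw [map_sum]
    refine Finset.sum_eq_zero fun b _ => ?_
    have hp1 : (weightedHomogeneousComponent α 0 (u c)
        * weightedHomogeneousComponent α 1 (syz F c b)).IsWeightedHomogeneous α 1 := by
      have := (weightedHomogeneousComponent_isWeightedHomogeneous (w := α) 0 (u c)).mul
        (weightedHomogeneousComponent_isWeightedHomogeneous (w := α) 1 (syz F c b))
      simpa using this
    rw [mul_comm _ (gens F b), wHC_mul_right α hp1 (gens F b) (by omega : 1 ≤ q), hwb b,
      zero_mul]
  exact (mul_ne_zero hfne hggne) hfinal

end Core

end EdgeProof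

open EdgeProof

/-- If a finite simple graph `G` is disconnected, every connected
component has an edge, and two of its components have nonzero toric ideal, then the edge
ring `K[G]` has no linear resolution. -/
theorem stmt_1 {V : Type} [Fintype V] (K : Type) [Field K] (G : SimpleGraph V)
    (hdisc : ¬ G.Connected)
    (hedge : ∀ v : V, ∃ w : V, G.Adj v w)
    (c₁ c₂ : G.ConnectedComponent) (hne : c₁ ≠ c₂)
    (h₁ : toricIdeal K (G.induce c₁.supp) ≠ ⊥)
    (h₂ : toricIdeal K (G.induce c₂.supp) ≠ ⊥) :
    ∀ q : ℕ, ¬ HasLinearResolution K (toricIdeal K G) q := by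
  classical
  intro q hlin
  obtain ⟨F, hB1, hdeg⟩ := hlin
  haveI := F.finB 1
  haveI := F.finB 2
  haveI : Fintype (F.B 1) := Fintype.ofFinite _
  haveI : Fintype (F.B 2) := Fintype.ofFinite _
  have hdeg1 : ∀ b : F.B 1, F.deg 1 b = q := fun b => by
    have := hdeg 1 le_rfl b; omega
  have hdeg2 : ∀ c : F.B 2, F.deg 2 c = q + 1 := fun c => by
    have := hdeg 2 (by omega) c; omega
  have hghomb : ∀ b, (gens F b).IsHomogeneous q := fun b => by
    have := F.homog_ε b; rwa [hdeg1 b] at this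
  have hgmem : ∀ b, gens F b ∈ toricIdeal K G := fun b => by
    have hmem : gens F b ∈ LinearMap.range F.ε := ⟨Finsupp.single b 1, rfl⟩
    rwa [F.range_ε] at hmem
  have hgkerb : ∀ b, edgeRingHom K G (gens F b) = 0 := fun b => hgmem b
  have hmin : ∀ z : MvPolynomial G.edgeSet K, edgeRingHom K G z = 0 →
      ∀ m : ℕ, z.IsHomogeneous m → z ≠ 0 → q ≤ m := fun z hz m hzm hzne =>
    min_degree F hghomb (show z ∈ toricIdeal K G from hz) hzm hzne
  obtain ⟨f₁, n₁, hf₁ker, hf₁ne, hf₁hom, hf₁supp⟩ := exists_pure_elem K c₁ h₁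
  obtain ⟨f₂, n₂, hf₂ker, hf₂ne, hf₂hom, hf₂supp⟩ := exists_pure_elem K c₂ h₂
  obtain ⟨b₀, hb₀⟩ : ∃ b, gens F b ≠ 0 := by
    by_contra hcon
    push_neg at hcon
    apply hf₁ne
    obtain ⟨P, hP⟩ : f₁ ∈ LinearMap.range F.ε := by
      rw [F.range_ε]; exact (show f₁ ∈ toricIdeal K G from hf₁ker)
    rw [← hP, eps_eq]
    exact Finset.sum_eq_zero fun b _ => by rw [hcon b, mul_zero]
  have hq2 : 2 ≤ q := by
    by_contra hq1
    push_neg at hq1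
    exact hb₀ (low_degree_ker (hgkerb b₀) (hghomb b₀) (by omega))
  set W := (c₁.supp : Set V) with hW
  have hWclosed : ∀ a b, G.Adj a b → (a ∈ W ↔ b ∈ W) := by
    intro a b hab
    simp only [hW, SimpleGraph.ConnectedComponent.mem_supp_iff]
    constructor
    · intro h; rw [← h]; exact (SimpleGraph.ConnectedComponent.connectedComponentMk_eq_of_adj hab).symm
    · intro h; rw [← h]; exact SimpleGraph.ConnectedComponent.connectedComponentMk_eq_of_adj hab
  have hWcclosed : ∀ a b, G.Adj a b → (a ∈ Wᶜ ↔ b ∈ Wᶜ) := compl_closed hWclosed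
  have hsupp_disj : ∀ v ∈ c₂.supp, v ∉ W := by
    intro v hv2 hv1
    rw [hW, SimpleGraph.ConnectedComponent.mem_supp_iff] at hv1
    rw [SimpleGraph.ConnectedComponent.mem_supp_iff] at hv2
    exact hne (by rw [← hv1, ← hv2])
  have hf₂A : f₂.IsWeightedHomogeneous (alphaW G W) 0 := by
    apply pure_weight_zero
    intro d hd e he
    by_contra hc
    have h1 : alphaW G W e = 1 := by have := alphaW_le_one (G := G) W e; omega
    obtain ⟨a, b, hab⟩ := sym2_exists_pair (e : Sym2 V)
    have ha : a ∈ (e : Sym2 V) := by rw [hab]; simp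
    exact hsupp_disj a (hf₂supp d hd e he a ha) (alphaW_eq_one h1 a ha)
  have hf₁Ac : f₁.IsWeightedHomogeneous (alphaW G Wᶜ) 0 := by
    apply pure_weight_zero
    intro d hd e he
    by_contra hc
    have h1 : alphaW G Wᶜ e = 1 := by have := alphaW_le_one (G := G) Wᶜ e; omega
    obtain ⟨a, b, hab⟩ := sym2_exists_pair (e : Sym2 V)
    have ha : a ∈ (e : Sym2 V) := by rw [hab]; simp
    have haW : a ∈ W := by rw [hW]; exact hf₁supp d hd e he a ha
    exact (alphaW_eq_one h1 a ha) haW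
  have hb₀bound : ∀ d ∈ (gens F b₀).support,
      Finsupp.weight (alphaW G W) d ≤ q := by
    intro d hd
    calc Finsupp.weight (alphaW G W) d ≤ d.degree :=
      weight_le_degree _ (alphaW_le_one W) d
    _ = q := by
        rw [degree_eq_w1]
        exact hghomb b₀ (MvPolynomial.mem_support_iff.mp hd)
  obtain ⟨i, hiq, hi0⟩ : ∃ i, i < q + 1 ∧
      weightedHomogeneousComponent (alphaW G W) i (gens F b₀) ≠ 0 := by
    by_contra hcon
    push_neg at hcon
    apply hb₀
    rw [← sum_wHC_of_le (alphaW G W) hb₀bound]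
    exact Finset.sum_eq_zero fun j hj => hcon j (Finset.mem_range.mp hj)
  set f := weightedHomogeneousComponent (alphaW G W) i (gens F b₀) with hfdef
  have hfker : edgeRingHom K G f = 0 :=
    wHC_ker _ (stab_alpha hWclosed) (hgkerb b₀) i
  have hfhom : f.IsHomogeneous q := wHC_isWeightedHomogeneous_of _ (hghomb b₀) i
  have hfA : f.IsWeightedHomogeneous (alphaW G W) i :=
    weightedHomogeneousComponent_isWeightedHomogeneous i _
  have hior : i = 0 ∨ i = q := by
    by_contra hcon
    push_neg at hcon
    exact hi0 (mixed_kill hWclosed hmin hfker hfhom hfA (by omega) (by omega))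
  rcases hior with rfl | rfl
  · have hfAc : f.IsWeightedHomogeneous (alphaW G Wᶜ) q := by
      have := weight_flip hWclosed hfhom hfA
      simpa using this
    exact core_contradiction F hq2 hdeg1 hdeg2 hWcclosed hfker hi0 hfhom hfAc
      hf₁ker hf₁ne hf₁hom hf₁Ac
  · exact core_contradiction F hq2 hdeg1 hdeg2 hWclosed hfker hi0 hfhom hfA
      hf₂ker hf₂ne hf₂hom hf₂A
end

section
/- Let q ≥ 3 and let G' be the disjoint union of two cycles of length 2q, a graph on 4q vertices with 4q edges. Then the codegree of the edge polytope P_{G'} is at most 2q; equivalently, the interior of 2q · P_{G'} contains a lattice point, namely e_1 + e_2 + ··· + e_{4q}. -/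
open MvPolynomial Finset
open scoped Pointwise

/-! ## Auxiliary lemmas -/

theorem pos_combo_mem_intrinsicInterior {V ι : Type} [Fintype V] [Fintype ι] [Nonempty ι]
    (f : ι → (V → ℝ)) (w : ι → ℝ) (hw : ∀ i, 0 < w i) (hw1 : ∑ i, w i = 1) :
    (∑ i, w i • f i) ∈ intrinsicInterior ℝ (convexHull ℝ (Set.range f)) := by
  classical
  set S : Set (V → ℝ) := Set.range f with hS
  set x : V → ℝ := ∑ i, w i • f i with hx
  have hxS : x ∈ affineSpan ℝ S := by
    have h := affineCombination_mem_affineSpan (k := ℝ) (s := Finset.univ) hw1 f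
    rwa [Finset.affineCombination_eq_linear_combination _ _ _ hw1] at h
  set W : Submodule ℝ (V → ℝ) := vectorSpan ℝ S with hWdef
  have hfx : ∀ i, f i - x ∈ W := by
    intro i
    have h1 : f i ∈ affineSpan ℝ S := mem_affineSpan ℝ (Set.mem_range_self i)
    have h2 := AffineSubspace.vsub_mem_direction h1 hxS
    rwa [direction_affineSpan] at h2
  set F : (ι → ℝ) →ₗ[ℝ] (V → ℝ) :=
    { toFun := fun c => ∑ i, c i • (f i - x)
      map_add' := by intro a b; simp [add_smul, Finset.sum_add_distrib]
      map_smul' := by intro m a; simp [smul_smul, Finset.smul_sum] } with hF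
  have hFapply : ∀ c, F c = ∑ i, c i • (f i - x) := fun c => rfl
  have hFW : ∀ c, F c ∈ W := fun c =>
    Submodule.sum_mem _ fun i _ => Submodule.smul_mem _ _ (hfx i)
  have hFsingle : ∀ i, F (Pi.single i 1) = f i - x := by
    intro i
    rw [hFapply, Finset.sum_eq_single i]
    · simp
    · intro j _ hj; simp [Pi.single_apply, hj]
    · simp
  have hWrange : W ≤ LinearMap.range F := by
    rw [hWdef, vectorSpan_def, Submodule.span_le]
    rintro v hv
    rw [Set.mem_vsub] at hv
    obtain ⟨a, ha, b, hb, rfl⟩ := hv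
    obtain ⟨i, rfl⟩ := ha
    obtain ⟨j, rfl⟩ := hb
    refine ⟨Pi.single i 1 - Pi.single j 1, ?_⟩
    rw [map_sub, hFsingle, hFsingle]
    simp [vsub_eq_sub]
  set F₀ : (ι → ℝ) →ₗ[ℝ] W := F.codRestrict W hFW with hF₀
  have hF₀surj : Function.Surjective F₀ := by
    rintro ⟨v, hv⟩
    obtain ⟨c, hc⟩ := hWrange hv
    exact ⟨c, Subtype.ext hc⟩
  obtain ⟨G, hG⟩ := F₀.exists_rightInverse_of_surjective (LinearMap.range_eq_top.2 hF₀surj)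
  have hFG : ∀ v : W, F (G v) = v := by
    intro v
    have h : F₀ (G v) = v := by rw [← LinearMap.comp_apply, hG]; rfl
    exact congrArg Subtype.val h
  obtain ⟨W', hW'⟩ := Submodule.exists_isCompl W
  set π := W.linearProjOfIsCompl W' hW' with hπdef
  have hπ : ∀ (v : V → ℝ) (hv : v ∈ W), π v = ⟨v, hv⟩ := fun v hv =>
    Submodule.linearProjOfIsCompl_apply_left hW' ⟨v, hv⟩
  set H : (V → ℝ) →ₗ[ℝ] (ι → ℝ) := G.comp π with hH
  set m : ℝ := Finset.univ.inf' Finset.univ_nonempty w with hm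
  have hm0 : 0 < m := by rw [hm, Finset.lt_inf'_iff]; exact fun i _ => hw i
  have hmle : ∀ i, m ≤ w i := fun i => Finset.inf'_le _ (Finset.mem_univ i)
  set nn : ℕ := Fintype.card ι with hnn
  set B : ℝ := m / (nn + 1) with hB
  have hB0 : 0 < B := div_pos hm0 (by positivity)
  have hBm : (nn : ℝ) * B + B ≤ m := by
    have h : ((nn : ℝ) + 1) * B = m := by
      rw [hB]; field_simp
    linarith
  set Ω : Set (ι → ℝ) := {c | ∀ i, |c i| < B} with hΩ
  have hΩopen : IsOpen Ω := by
    have h : Ω = ⋂ i, (fun c : ι → ℝ => |c i|) ⁻¹' Set.Iio B := by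
      ext c; simp [hΩ]
    rw [h]
    exact isOpen_iInter_of_finite fun i => isOpen_Iio.preimage ((continuous_apply i).abs)
  have hφcont : Continuous fun y : V → ℝ => H (y - x) :=
    H.continuous_of_finiteDimensional.comp (continuous_id.sub continuous_const)
  set U : Set (V → ℝ) := (fun y => H (y - x)) ⁻¹' Ω with hU
  have hU_nhds : U ∈ nhds x := by
    apply (hΩopen.preimage hφcont).mem_nhds
    show H (x - x) ∈ Ω
    rw [sub_self, map_zero]
    intro i
    simpa using hB0
  have key : ∀ y, y ∈ affineSpan ℝ S → y ∈ U → y ∈ convexHull ℝ S := by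
    intro y hy hyU
    have hvW : y - x ∈ W := by
      have h := AffineSubspace.vsub_mem_direction hy hxS
      rwa [direction_affineSpan] at h
    set c : ι → ℝ := H (y - x) with hc
    have hcB : ∀ i, |c i| < B := hyU
    have hFc : F c = y - x := by
      rw [hc, hH, LinearMap.comp_apply, hπ _ hvW, hFG]
    set t : ℝ := ∑ i, c i with ht
    set c' : ι → ℝ := fun i => c i - t * w i with hc'
    have hsum_c' : ∑ i, c' i = 0 := by
      simp [hc', Finset.sum_sub_distrib, ← Finset.mul_sum, hw1, ht]
    have hFw : F w = 0 := by
      rw [hFapply]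
      have h : ∑ i, w i • (f i - x) = (∑ i, w i • f i) - (∑ i, w i) • x := by
        rw [Finset.sum_smul, ← Finset.sum_sub_distrib]
        exact Finset.sum_congr rfl fun i _ => smul_sub _ _ _
      rw [h, hw1, one_smul, ← hx, sub_self]
    have hFc' : F c' = y - x := by
      have h : c' = c - t • w := by funext i; simp [hc', smul_eq_mul]
      rw [h, map_sub, map_smul, hFw, smul_zero, sub_zero, hFc]
    have hwle1 : ∀ i, w i ≤ 1 := by
      intro i
      rw [← hw1]
      exact Finset.single_le_sum (fun j _ => (hw j).le) (Finset.mem_univ i)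
    have ht_bound : |t| ≤ (nn : ℝ) * B := by
      calc |t| ≤ ∑ i, |c i| := Finset.abs_sum_le_sum_abs _ _
        _ ≤ (nn : ℝ) * B := by
            have h := Finset.sum_le_card_nsmul Finset.univ (fun i => |c i|) B
              (fun i _ => (hcB i).le)
            simpa [hnn, nsmul_eq_mul, Finset.card_univ] using h
    have hc'B : ∀ i, |c' i| < m := by
      intro i
      have h1 : |c' i| ≤ |c i| + |t| * w i := by
        calc |c' i| = |c i - t * w i| := rfl
          _ ≤ |c i| + |t * w i| := abs_sub _ _
          _ = |c i| + |t| * w i := by rw [abs_mul, abs_of_pos (hw i)]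
      have h2 : |t| * w i ≤ (nn : ℝ) * B :=
        le_trans (mul_le_of_le_one_right (abs_nonneg t) (hwle1 i)) ht_bound
      have h3 := hcB i
      linarith
    set u : ι → ℝ := fun i => w i + c' i with hu
    have hu0 : ∀ i, 0 ≤ u i := by
      intro i
      have h1 := (abs_lt.mp (hc'B i)).1
      have h2 := hmle i
      simp only [hu]
      linarith
    have husum : ∑ i, u i = 1 := by
      simp [hu, Finset.sum_add_distrib, hw1, hsum_c']
    have hy_eq : y = ∑ i, u i • f i := by
      have h1 : ∑ i, u i • f i = (∑ i, w i • f i) + ∑ i, c' i • f i := by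
        simp [hu, add_smul, Finset.sum_add_distrib]
      have h2 : ∑ i, c' i • f i = F c' := by
        rw [hFapply]
        have h3 : ∑ i, c' i • (f i - x) = (∑ i, c' i • f i) - (∑ i, c' i) • x := by
          rw [Finset.sum_smul, ← Finset.sum_sub_distrib]
          exact Finset.sum_congr rfl fun i _ => smul_sub _ _ _
        rw [h3, hsum_c', zero_smul, sub_zero]
      rw [h1, h2, hFc', ← hx]
      abel
    rw [hy_eq]
    have h := Finset.centerMass_mem_convexHull (Finset.univ) (w := u) (fun i _ => hu0 i)
      (by rw [husum]; norm_num) (fun i _ => Set.mem_range_self (f := f) i)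
    rwa [Finset.centerMass_eq_of_sum_1 _ _ husum] at h
  rw [mem_intrinsicInterior]
  have hxmem : x ∈ affineSpan ℝ (convexHull ℝ S) := by
    rw [affineSpan_convexHull]; exact hxS
  refine ⟨⟨x, hxmem⟩, ?_, rfl⟩
  rw [mem_interior_iff_mem_nhds, nhds_subtype_eq_comap, Filter.mem_comap]
  refine ⟨U, hU_nhds, ?_⟩
  rintro ⟨y, hy⟩ hyU
  have hy' : y ∈ affineSpan ℝ S := by rwa [affineSpan_convexHull] at hy
  exact key y hy' hyU

lemma fin_succ_iff {n : ℕ} [NeZero n] (hn : 2 ≤ n) (a b : Fin n) :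
    (a.val + 1 = b.val ∨ (a.val = n - 1 ∧ b.val = 0)) ↔ b = a + 1 := by
  have hval : (a + 1 : Fin n).val = (a.val + 1) % n := by
    rw [Fin.add_def, Fin.val_one' n, Nat.mod_eq_of_lt (show 1 < n by omega)]
  constructor
  · rintro (h | ⟨h1, h2⟩)
    · apply Fin.ext
      rw [hval, ← h, Nat.mod_eq_of_lt (h ▸ b.isLt)]
    · apply Fin.ext
      rw [hval, h1, h2]
      have : n - 1 + 1 = n := by omega
      rw [this, Nat.mod_self]
  · rintro rfl
    rw [hval]
    rcases Nat.lt_or_ge (a.val + 1) n with h | h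
    · left; rw [Nat.mod_eq_of_lt h]
    · right
      have ha := a.isLt
      have h1 : a.val = n - 1 := by omega
      have h2 : a.val + 1 = n := by omega
      rw [h2, Nat.mod_self]
      exact ⟨h1, rfl⟩

lemma succ_ne {n : ℕ} [NeZero n] (hn : 2 ≤ n) (a : Fin n) : a + 1 ≠ a := by
  intro h
  have h1 : (1 : Fin n) = 0 := by
    have h2 : a + 1 = a + 0 := by rw [add_zero]; exact h
    exact add_left_cancel h2
  have h3 := congrArg Fin.val h1
  rw [Fin.val_one' n, Nat.mod_eq_of_lt (show 1 < n by omega), Fin.val_zero] at h3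
  omega

lemma edgeSet_twoCycles {n : ℕ} [NeZero n] (hn : 2 ≤ n) :
    (twoCyclesGraph n).edgeSet =
      Set.range (fun p : Fin 2 × Fin n => s(p, (p.1, p.2 + 1))) := by
  ext e
  induction e using Sym2.ind with
  | _ a b =>
    constructor
    · intro hab
      rw [SimpleGraph.mem_edgeSet, twoCyclesGraph, SimpleGraph.fromRel_adj] at hab
      obtain ⟨hne, h | h⟩ := hab
      · obtain ⟨h1, h2⟩ := h
        rw [fin_succ_iff hn] at h2
        refine ⟨a, ?_⟩
        show s(a, (a.1, a.2 + 1)) = s(a, b)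
        have hb : b = (a.1, a.2 + 1) := Prod.ext h1.symm h2
        rw [hb]
      · obtain ⟨h1, h2⟩ := h
        rw [fin_succ_iff hn] at h2
        refine ⟨b, ?_⟩
        show s(b, (b.1, b.2 + 1)) = s(a, b)
        have ha : a = (b.1, b.2 + 1) := Prod.ext h1.symm h2
        rw [ha, Sym2.eq_swap]
    · rintro ⟨p, hp⟩
      rw [← hp]
      show s(p, (p.1, p.2 + 1)) ∈ (twoCyclesGraph n).edgeSet
      rw [SimpleGraph.mem_edgeSet, twoCyclesGraph, SimpleGraph.fromRel_adj]
      refine ⟨?_, Or.inl ⟨rfl, ?_⟩⟩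
      · intro h
        have h2 := congrArg Prod.snd h
        exact succ_ne hn p.2 h2.symm
      · rw [fin_succ_iff hn]

lemma sum_rho_twoCycles {n : ℕ} [NeZero n] (hn : 2 ≤ n) :
    ∑ p : Fin 2 × Fin n, rho (s(p, (p.1, p.2 + 1))) = fun _ => (2 : ℝ) := by
  funext v
  rw [Finset.sum_apply]
  have hrho : ∀ p : Fin 2 × Fin n, rho (s(p, (p.1, p.2 + 1))) v =
      (if v = p then (1:ℝ) else 0) + (if v = (p.1, p.2 + 1) then 1 else 0) := by
    intro p
    rw [rho, Sym2.lift_mk]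
  simp only [hrho]
  rw [Finset.sum_add_distrib]
  have h1 : ∑ p : Fin 2 × Fin n, (if v = p then (1:ℝ) else 0) = 1 := by
    simp
  have h2 : ∑ p : Fin 2 × Fin n, (if v = (p.1, p.2 + 1) then (1:ℝ) else 0) = 1 := by
    let e : Fin 2 × Fin n ≃ Fin 2 × Fin n :=
      (Equiv.refl (Fin 2)).prodCongr (Equiv.addRight (1 : Fin n))
    calc ∑ p : Fin 2 × Fin n, (if v = (p.1, p.2 + 1) then (1:ℝ) else 0)
        = ∑ p : Fin 2 × Fin n, (fun z : Fin 2 × Fin n => if v = z then (1:ℝ) else 0) (e p) := by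
          refine Finset.sum_congr rfl fun p _ => ?_
          have : Prod.map id (fun x : Fin n => x + 1) p = (p.1, p.2 + 1) := rfl
          simp [e, Equiv.prodCongr, Equiv.addRight, this]
      _ = ∑ z : Fin 2 × Fin n, (if v = z then (1:ℝ) else 0) :=
          Equiv.sum_comp e (fun z : Fin 2 × Fin n => if v = z then (1:ℝ) else 0)
      _ = 1 := by simp
  rw [h1, h2]
  norm_num

/-- For the disjoint union `G'` of two `2q`-cycles (`q ≥ 3`), the lattice
point `e₁ + ⋯ + e_{4q}` (the all-ones vector) lies in the relative interior of
`2q · P_{G'}`; hence `codeg(P_{G'}) ≤ 2q`. -/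
theorem stmt_4 (q : ℕ) (hq : 3 ≤ q) :
    ((fun _ : Fin 2 × Fin (2 * q) => ((1 : ℤ) : ℝ)) ∈
      intrinsicInterior ℝ (((2 * q : ℕ) : ℝ) • edgePolytope (twoCyclesGraph (2 * q)))) ∧
    polyCodeg (edgePolytope (twoCyclesGraph (2 * q))) ≤ 2 * q := by
  haveI : NeZero (2 * q) := ⟨by omega⟩
  have hn : 2 ≤ 2 * q := by omega
  haveI : Nonempty (Fin (2 * q)) := ⟨⟨0, by omega⟩⟩
  set f : Fin 2 × Fin (2 * q) → (Fin 2 × Fin (2 * q) → ℝ) :=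
    fun p => ((2 * q : ℕ) : ℝ) • rho (s(p, (p.1, p.2 + 1))) with hf
  have hq0 : (0:ℝ) < ((4 * q : ℕ) : ℝ) := by exact_mod_cast (show 0 < 4 * q by omega)
  have hqne : ((q : ℝ)) ≠ 0 := by exact_mod_cast (show q ≠ 0 by omega)
  have hmain : (fun _ : Fin 2 × Fin (2 * q) => ((1 : ℤ) : ℝ)) ∈
      intrinsicInterior ℝ (((2 * q : ℕ) : ℝ) • edgePolytope (twoCyclesGraph (2 * q))) := by
    have hrange : Set.range f =
        ((2 * q : ℕ) : ℝ) • (rho '' (twoCyclesGraph (2 * q)).edgeSet) := by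
      rw [edgeSet_twoCycles hn, ← Set.range_comp, Set.smul_set_range]
      rfl
    have hhull : ((2 * q : ℕ) : ℝ) • edgePolytope (twoCyclesGraph (2 * q)) =
        convexHull ℝ (Set.range f) := by
      rw [edgePolytope, ← convexHull_smul, hrange]
    rw [hhull]
    have hwpos : ∀ _i : Fin 2 × Fin (2 * q), (0:ℝ) < (((4 * q : ℕ) : ℝ))⁻¹ :=
      fun _ => inv_pos.mpr hq0
    have hw1 : ∑ _i : Fin 2 × Fin (2 * q), ((((4 * q : ℕ) : ℝ))⁻¹) = 1 := by
      rw [Finset.sum_const, Finset.card_univ, Fintype.card_prod, Fintype.card_fin,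
        Fintype.card_fin, nsmul_eq_mul]
      push_cast
      field_simp
      ring
    have hsum : ∑ i : Fin 2 × Fin (2 * q), ((((4 * q : ℕ) : ℝ))⁻¹) • f i
        = fun _ : Fin 2 × Fin (2 * q) => ((1 : ℤ) : ℝ) := by
      simp only [hf]
      rw [← Finset.smul_sum, ← Finset.smul_sum, sum_rho_twoCycles hn]
      funext v
      simp only [Pi.smul_apply, smul_eq_mul, Int.cast_one]
      push_cast
      field_simp
      ring
    have h := pos_combo_mem_intrinsicInterior f
      (fun _ => (((4 * q : ℕ) : ℝ))⁻¹) hwpos hw1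
    rwa [hsum] at h
  refine ⟨hmain, ?_⟩
  apply Nat.sInf_le
  exact ⟨by omega, ⟨fun _ => 1, hmain⟩⟩
end

section
/- Let q ≥ 3 and let G' be the disjoint union of two cycles of length 2q. Then deg(P_{G'}) ≥ 2q − 2, where deg(P) denotes the degree of the h*-polynomial of the edge polytope P_{G'}. In particular deg(P_{G'}) ≥ q. -/
open MvPolynomial Finset
open scoped Pointwise

/-! ### Fin helpers avoiding numerals -/

def nxt {n : ℕ} (i : Fin n) : Fin n := ⟨(i.val + 1) % n, Nat.mod_lt _ i.pos⟩
def prv {n : ℕ} (i : Fin n) : Fin n := ⟨(i.val + (n - 1)) % n, Nat.mod_lt _ i.pos⟩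

lemma nxt_val {n : ℕ} (i : Fin n) :
    (nxt i).val = if i.val = n - 1 then 0 else i.val + 1 := by
  have := i.isLt
  simp only [nxt]
  split_ifs with h
  · simp [h, Nat.sub_add_cancel (by omega : 1 ≤ n)]
  · exact Nat.mod_eq_of_lt (by omega)

lemma prv_val {n : ℕ} (i : Fin n) :
    (prv i).val = if i.val = 0 then n - 1 else i.val - 1 := by
  have hn := i.pos
  simp only [prv]
  split_ifs with h
  · rw [h, Nat.zero_add]
    exact Nat.mod_eq_of_lt (by omega)
  · have h2 : i.val + (n - 1) = n + (i.val - 1) := by omega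
    rw [h2, Nat.add_mod_left]
    exact Nat.mod_eq_of_lt (by omega)

lemma prv_nxt {n : ℕ} (i : Fin n) : prv (nxt i) = i := by
  have hlt : i.val < n := i.isLt
  apply Fin.ext
  rw [prv_val, nxt_val]
  split_ifs <;> first | contradiction | omega

lemma nxt_prv {n : ℕ} (i : Fin n) : nxt (prv i) = i := by
  have hlt : i.val < n := i.isLt
  apply Fin.ext
  rw [nxt_val, prv_val]
  split_ifs <;> first | contradiction | omega

lemma nxt_injective {n : ℕ} : Function.Injective (nxt (n := n)) := fun i j h => by
  have := congrArg prv h; rwa [prv_nxt, prv_nxt] at this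

lemma nxt_ne {n : ℕ} (hn : 2 ≤ n) (i : Fin n) : nxt i ≠ i := by
  intro h
  have := congrArg Fin.val h
  rw [nxt_val] at this
  have := i.isLt
  split_ifs at * <;> omega

lemma nxt_nxt_ne {n : ℕ} (hn : 3 ≤ n) (i : Fin n) : nxt (nxt i) ≠ i := by
  intro h
  have := congrArg Fin.val h
  rw [nxt_val, nxt_val] at this
  have := i.isLt
  split_ifs at * <;> first | contradiction | omega

section Graph
variable (q : ℕ)

abbrev VV := Fin 2 × Fin (2 * q)

/-- edge vectors, indexed by `(b, i)`: the edge joining `(b,i)` and `(b, nxt i)`. -/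
noncomputable def gvec (p : VV q) : VV q → ℝ := fun v =>
  (if v = (p.1, p.2) then (1:ℝ) else 0) + (if v = (p.1, nxt p.2) then 1 else 0)

variable {q}

lemma edge_mem (hq : 1 ≤ q) (p : VV q) :
    s(((p.1, p.2) : VV q), (p.1, nxt p.2)) ∈ (twoCyclesGraph (2 * q)).edgeSet := by
  rw [SimpleGraph.mem_edgeSet, twoCyclesGraph, SimpleGraph.fromRel_adj]
  constructor
  · intro h
    exact nxt_ne (by omega) p.2 (congrArg Prod.snd h).symm
  · left
    refine ⟨rfl, ?_⟩
    rw [nxt_val]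
    split_ifs with h
    · right; exact ⟨h, rfl⟩
    · left; rfl

lemma edge_repr (hq : 1 ≤ q) {e : Sym2 (VV q)} (he : e ∈ (twoCyclesGraph (2 * q)).edgeSet) :
    ∃ p : VV q, e = s((p.1, p.2), (p.1, nxt p.2)) := by
  induction e with
  | _ u v =>
    rw [SimpleGraph.mem_edgeSet, twoCyclesGraph, SimpleGraph.fromRel_adj] at he
    obtain ⟨hne, h | h⟩ := he
    · obtain ⟨h1, h2⟩ := h
      refine ⟨(u.1, u.2), ?_⟩
      have hv : v.2 = nxt u.2 := by
        apply Fin.ext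
        rw [nxt_val]
        have := v.2.isLt
        rcases h2 with h2 | h2
        · split_ifs with hh <;> omega
        · rw [if_pos h2.1, h2.2]
      rw [show v = (u.1, nxt u.2) from Prod.ext h1.symm hv]
    · obtain ⟨h1, h2⟩ := h
      refine ⟨(v.1, v.2), ?_⟩
      have hv : u.2 = nxt v.2 := by
        apply Fin.ext
        rw [nxt_val]
        have := u.2.isLt
        rcases h2 with h2 | h2
        · split_ifs with hh <;> omega
        · rw [if_pos h2.1, h2.2]
      rw [show u = (v.1, nxt v.2) from Prod.ext h1.symm hv, Sym2.eq_swap]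

lemma rho_edge (p : VV q) :
    rho s(((p.1, p.2) : VV q), (p.1, nxt p.2)) = gvec q p := by
  funext v
  simp [rho, Sym2.lift_mk, gvec]

lemma rho_image (hq : 1 ≤ q) :
    rho '' (twoCyclesGraph (2 * q)).edgeSet = Set.range (gvec q) := by
  ext x
  constructor
  · rintro ⟨e, he, rfl⟩
    obtain ⟨p, rfl⟩ := edge_repr hq he
    exact ⟨p, (rho_edge p).symm⟩
  · rintro ⟨p, rfl⟩
    exact ⟨_, edge_mem hq p, rho_edge p⟩

lemma gvec_apply (p v : VV q) :
    gvec q p v = (if v = (p.1, p.2) then (1:ℝ) else 0) + (if v = (p.1, nxt p.2) then 1 else 0) :=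
  rfl

lemma gvec_eq_one_cases {p v : VV q} (h : gvec q p v = 1) :
    v = (p.1, p.2) ∨ v = (p.1, nxt p.2) := by
  by_cases h1 : v = (p.1, p.2)
  · exact Or.inl h1
  · by_cases h2 : v = (p.1, nxt p.2)
    · exact Or.inr h2
    · rw [gvec_apply, if_neg h1, if_neg h2] at h; norm_num at h

lemma gvec_self (hq : 1 ≤ q) (p : VV q) : gvec q p (p.1, p.2) = 1 := by
  have hne : ((p.1, p.2) : VV q) ≠ (p.1, nxt p.2) := by
    intro hcon
    exact nxt_ne (by omega) p.2 (congrArg Prod.snd hcon).symm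
  rw [gvec_apply, if_pos rfl, if_neg hne, add_zero]

lemma gvec_nxt (hq : 1 ≤ q) (p : VV q) : gvec q p (p.1, nxt p.2) = 1 := by
  have hne : ((p.1, nxt p.2) : VV q) ≠ (p.1, p.2) := by
    intro hcon
    exact nxt_ne (by omega) p.2 (congrArg Prod.snd hcon)
  rw [gvec_apply, if_pos rfl, if_neg hne, zero_add]

lemma gvec_injective (hq : 2 ≤ q) : Function.Injective (gvec q) := by
  intro p p' h
  have h3 : (3:ℕ) ≤ 2 * q := by omega
  have e1 : gvec q p' (p.1, p.2) = 1 := by rw [← h]; exact gvec_self (by omega) p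
  have e2 : gvec q p' (p.1, nxt p.2) = 1 := by rw [← h]; exact gvec_nxt (by omega) p
  rcases gvec_eq_one_cases e1 with hA | hB
  · exact Prod.ext (congrArg Prod.fst hA) (congrArg Prod.snd hA)
  · rcases gvec_eq_one_cases e2 with hC | hD
    · exfalso
      have b2 : p.2 = nxt p'.2 := congrArg Prod.snd hB
      have c2 : nxt p.2 = p'.2 := congrArg Prod.snd hC
      rw [← c2] at b2
      exact nxt_nxt_ne h3 p.2 b2.symm
    · exfalso
      have := nxt_injective (congrArg Prod.snd hD)
      have b2 : p.2 = nxt p'.2 := congrArg Prod.snd hB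
      rw [← this] at b2
      exact nxt_ne (by omega) p.2 b2.symm

end Graph

section Membership
variable {q : ℕ}

lemma sum_gvec_apply (c : VV q → ℝ) (v : VV q) :
    ∑ p : VV q, c p * gvec q p v = c (v.1, prv v.2) + c (v.1, v.2) := by
  have h1 : ∀ p : VV q, (if v = (p.1, p.2) then (1:ℝ) else 0) = (if p = v then 1 else 0) := by
    intro p; simp [eq_comm]
  have h2 : ∀ p : VV q, (if v = (p.1, nxt p.2) then (1:ℝ) else 0)
      = (if p = (v.1, prv v.2) then 1 else 0) := by
    intro p
    refine if_congr ⟨fun hc => ?_, fun hc => ?_⟩ rfl rfl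
    · refine Prod.ext (congrArg Prod.fst hc).symm ?_
      have h2' : v.2 = nxt p.2 := congrArg Prod.snd hc
      rw [h2', prv_nxt]
    · refine Prod.ext (congrArg Prod.fst hc).symm ?_
      have h2' : p.2 = prv v.2 := congrArg Prod.snd hc
      rw [h2', nxt_prv]
  have hsplit : ∀ p : VV q, c p * gvec q p v =
      (if p = v then c p else 0) + (if p = (v.1, prv v.2) then c p else 0) := by
    intro p
    rw [gvec_apply, mul_add, h1, h2, mul_ite, mul_one, mul_zero, mul_ite, mul_one, mul_zero]
  rw [Finset.sum_congr rfl (fun p _ => hsplit p), Finset.sum_add_distrib]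
  rw [Finset.sum_ite_eq' Finset.univ v c, Finset.sum_ite_eq' Finset.univ (v.1, prv v.2) c]
  simp [add_comm]

lemma sum_smul_gvec_apply (c : VV q → ℝ) (v : VV q) :
    (∑ p : VV q, c p • gvec q p) v = c (v.1, prv v.2) + c (v.1, v.2) := by
  rw [Finset.sum_apply]
  simpa using sum_gvec_apply c v

lemma mem_dilate (hq : 2 ≤ q) {t : ℝ} (ht : 0 < t) (x : VV q → ℝ) :
    x ∈ t • edgePolytope (twoCyclesGraph (2 * q)) ↔
      ∃ c : VV q → ℝ, (∀ p, 0 ≤ c p) ∧ (∑ p, c p = t) ∧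
        ∀ v, x v = c (v.1, prv v.2) + c (v.1, v.2) := by
  have hq1 : 1 ≤ q := by omega
  rw [edgePolytope, rho_image hq1]
  constructor
  · rintro hx
    obtain ⟨y, hy, rfl⟩ := Set.mem_smul_set.mp hx
    have hrange : Set.range (gvec q) = ↑(Finset.univ.image (gvec q)) := by
      rw [Finset.coe_image, Finset.coe_univ, Set.image_univ]
    rw [hrange, Finset.convexHull_eq] at hy
    obtain ⟨w, hw0, hw1, hwy⟩ := hy
    refine ⟨fun p => t * w (gvec q p), fun p => mul_nonneg ht.le ?_, ?_, ?_⟩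
    · exact hw0 _ (Finset.mem_image_of_mem _ (Finset.mem_univ p))
    · rw [← Finset.mul_sum]
      rw [Finset.sum_image (fun a _ b _ hab => gvec_injective hq hab)] at hw1
      rw [hw1, mul_one]
    · intro v
      have hy2 : y = ∑ p : VV q, w (gvec q p) • gvec q p := by
        rw [← hwy, Finset.centerMass_eq_of_sum_1 _ id hw1]
        rw [Finset.sum_image (fun a _ b _ hab => gvec_injective hq hab)]
        rfl
      rw [Pi.smul_apply, hy2]
      rw [show (∑ p : VV q, w (gvec q p) • gvec q p) v
            = w ((v.1, prv v.2) |> gvec q) + w (gvec q (v.1, v.2)) from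
        sum_smul_gvec_apply (fun p => w (gvec q p)) v]
      simp [mul_add]
  · rintro ⟨c, hc0, hct, hcx⟩
    have hxeq : x = t • (Finset.univ.centerMass (fun p => c p / t) (gvec q)) := by
      rw [Finset.centerMass_eq_of_sum_1]
      · funext v
        rw [Pi.smul_apply]
        rw [show (∑ p : VV q, (c p / t) • gvec q p) v
              = (c (v.1, prv v.2) / t) + (c (v.1, v.2) / t) from by
          simpa using sum_smul_gvec_apply (fun p => c p / t) v]
        rw [hcx v]
        rw [smul_eq_mul]
        field_simp
      · rw [← Finset.sum_div, hct, div_self ht.ne']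
    rw [hxeq]
    apply Set.smul_mem_smul_set
    exact Finset.centerMass_mem_convexHull _ (fun p _ => div_nonneg (hc0 p) ht.le)
      (by rw [← Finset.sum_div, hct, div_self ht.ne']; norm_num)
      (fun p _ => Set.mem_range_self p)

end Membership

section Integrality
variable {q : ℕ}

lemma neg_one_pow_prv (hq : 1 ≤ q) (i : Fin (2 * q)) :
    ((-1 : ℝ)) ^ ((prv i).val) = -((-1 : ℝ)) ^ (i.val) := by
  rw [prv_val]
  split_ifs with h
  · rw [h, pow_zero]
    have hodd : Odd (2 * q - 1) := by
      refine ⟨q - 1, by omega⟩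
    rw [hodd.neg_one_pow]
  · have hk : i.val = (i.val - 1) + 1 := by omega
    set k := i.val - 1 with hkdef
    rw [hk, pow_succ]
    ring

lemma sum_neg_one_pow_fin (hq : 1 ≤ q) :
    ∑ i : Fin (2 * q), ((-1 : ℝ)) ^ (i.val) = 0 := by
  rw [Fin.sum_univ_eq_sum_range (fun k => ((-1 : ℝ)) ^ k) (2 * q)]
  rw [neg_one_geom_sum, if_pos (even_two_mul q)]

lemma lattice_mem (hq : 2 ≤ q) {t : ℕ} (ht : 1 ≤ t) (x : VV q → ℤ) :
    ((fun v => (x v : ℝ)) ∈ (t : ℝ) • edgePolytope (twoCyclesGraph (2 * q))) ↔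
      ∃ a : VV q → ℕ, (∑ p, a p = t) ∧
        ∀ v : VV q, x v = a (v.1, prv v.2) + a (v.1, v.2) := by
  have htR : (0 : ℝ) < t := by exact_mod_cast ht
  rw [mem_dilate hq htR]
  constructor
  · rintro ⟨c, hc0, hct, hcx⟩
    have i0lt : 0 < 2 * q := by omega
    set i0 : Fin (2 * q) := ⟨0, i0lt⟩ with hi0
    have blockRound : ∀ b : Fin 2, ∃ m : Fin (2 * q) → ℤ,
        (∀ i, 0 ≤ m i) ∧ (∀ i, m (prv i) + m i = x (b, i)) ∧
        ((∑ i, m i : ℤ) : ℝ) = ∑ i, c (b, i) := by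
      intro b
      have key : ∀ k : ℕ, ∀ hk : k < 2 * q, ∃ z : ℤ,
          c (b, ⟨k, hk⟩) = (z : ℝ) + (-1 : ℝ) ^ k * c (b, i0) := by
        intro k
        induction k with
        | zero => intro hk; exact ⟨0, by simp [hi0]⟩
        | succ k ih =>
          intro hk
          obtain ⟨z, hz⟩ := ih (by omega)
          have hrel := hcx (b, ⟨k + 1, hk⟩)
          have hprv : prv (⟨k + 1, hk⟩ : Fin (2 * q)) = ⟨k, by omega⟩ := by
            apply Fin.ext
            rw [prv_val]
            simp
          rw [hprv] at hrel
          refine ⟨x (b, ⟨k + 1, hk⟩) - z, ?_⟩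
          have : c (b, ⟨k + 1, hk⟩) = (x (b, ⟨k + 1, hk⟩) : ℝ) - c (b, ⟨k, by omega⟩) := by
            rw [hrel]; ring
          rw [this, hz]
          push_cast
          ring
      have key' : ∀ i : Fin (2 * q), ∃ z : ℤ,
          c (b, i) = (z : ℝ) + (-1 : ℝ) ^ (i.val) * c (b, i0) := by
        intro i
        obtain ⟨z, hz⟩ := key i.val i.isLt
        exact ⟨z, by rwa [Fin.eta] at hz⟩
      choose z hz using key'
      set c0 : ℝ := c (b, i0) with hc0def
      set θ : ℝ := Int.fract c0 with hθ
      have hθ0 : 0 ≤ θ := Int.fract_nonneg c0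
      have hθ1 : θ < 1 := Int.fract_lt_one c0
      set m : Fin (2 * q) → ℤ := fun i =>
        if Even i.val then z i + ⌊c0⌋ else z i - ⌊c0⌋ with hm
      have hfr : θ = c0 - ⌊c0⌋ := by rw [hθ, Int.fract]
      have hmval : ∀ i, (m i : ℝ) = c (b, i) - (-1 : ℝ) ^ (i.val) * θ := by
        intro i
        simp only [hm]
        by_cases he : Even i.val
        · rw [if_pos he, hz i, he.neg_one_pow]
          push_cast
          rw [hfr]
          ring
        · rw [if_neg he, hz i, (Nat.not_even_iff_odd.mp he).neg_one_pow]
          push_cast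
          rw [hfr]
          ring
      refine ⟨m, ?_, ?_, ?_⟩
      · intro i
        by_cases he : Even i.val
        · have : (m i : ℝ) = c (b, i) - θ := by rw [hmval i, he.neg_one_pow, one_mul]
          have hgt : (-1 : ℝ) < (m i : ℝ) := by
            rw [this]
            have := hc0 (b, i)
            linarith
          have : (-1 : ℤ) < m i := by exact_mod_cast hgt
          omega
        · have : (m i : ℝ) = c (b, i) + θ := by
            rw [hmval i, (Nat.not_even_iff_odd.mp he).neg_one_pow]; ring
          have hge : (0 : ℝ) ≤ (m i : ℝ) := by
            rw [this]
            have := hc0 (b, i)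
            linarith
          exact_mod_cast hge
      · intro i
        have hrel := hcx (b, i)
        have : ((m (prv i) + m i : ℤ) : ℝ) = ((x (b, i) : ℤ) : ℝ) := by
          push_cast
          rw [hmval (prv i), hmval i, neg_one_pow_prv (by omega) i, hrel]
          push_cast
          ring
        exact_mod_cast this
      · push_cast
        rw [Finset.sum_congr rfl (fun i _ => hmval i)]
        rw [Finset.sum_sub_distrib, ← Finset.sum_mul, sum_neg_one_pow_fin (by omega)]
        ring
    choose mm hmm0 hmmrel hmmsum using blockRound
    refine ⟨fun p => (mm p.1 p.2).toNat, ?_, ?_⟩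
    · have hcast : ∀ p : VV q, ((((mm p.1 p.2).toNat : ℕ) : ℝ)) = ((mm p.1 p.2 : ℤ) : ℝ) := by
        intro p
        exact_mod_cast Int.toNat_of_nonneg (hmm0 p.1 p.2)
      have hreal : ((∑ p : VV q, (mm p.1 p.2).toNat : ℕ) : ℝ) = (t : ℝ) := by
        push_cast [hcast]
        rw [show ∑ p : VV q, ((mm p.1 p.2 : ℤ) : ℝ)
              = ∑ b : Fin 2, ∑ i : Fin (2 * q), ((mm b i : ℤ) : ℝ) from
          Fintype.sum_prod_type _]
        rw [Finset.sum_congr rfl (fun b _ => by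
          rw [← @Int.cast_sum, hmmsum b])]
        rw [← Fintype.sum_prod_type]
        exact hct
      exact_mod_cast hreal
    · intro v
      have hrel := hmmrel v.1 v.2
      rw [Prod.mk.eta] at hrel
      have hc1 : ((mm v.1 (prv v.2)).toNat : ℤ) = mm v.1 (prv v.2) :=
        Int.toNat_of_nonneg (hmm0 v.1 (prv v.2))
      have hc2 : ((mm v.1 v.2).toNat : ℤ) = mm v.1 v.2 :=
        Int.toNat_of_nonneg (hmm0 v.1 v.2)
      show x v = ((mm v.1 (prv v.2)).toNat : ℤ) + ((mm v.1 v.2).toNat : ℤ)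
      omega
  · rintro ⟨a, hat, hax⟩
    refine ⟨fun p => (a p : ℝ), fun p => by positivity, ?_, ?_⟩
    · beta_reduce
      exact_mod_cast hat
    · intro v
      rw [hax v]
      push_cast
      ring

end Integrality

section Canon
variable {q : ℕ}

variable (q) in
/-- canonical tuples: sum `t`, and in each block some odd position vanishes. -/
def CanonSet (t : ℕ) : Set (VV q → ℕ) :=
  {a | (∑ p, a p = t) ∧ ∀ b : Fin 2, ∃ i : Fin (2 * q), i.val % 2 = 1 ∧ a (b, i) = 0}

variable (q) in
def Fmap (a : VV q → ℕ) : VV q → ℤ := fun v => (a (v.1, prv v.2) : ℤ) + a (v.1, v.2)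

lemma prv_parity (i : Fin (2 * q)) : (prv i).val % 2 ≠ i.val % 2 := by
  have h1 := i.isLt
  have h2 : 1 ≤ q := by by_contra h; interval_cases q <;> omega
  rw [prv_val]
  split_ifs with h <;> omega

lemma walk_diff {a a' : VV q → ℕ} (h : Fmap q a = Fmap q a') (b : Fin 2) (h0 : 0 < 2 * q) :
    ∀ k : ℕ, ∀ hk : k < 2 * q, (a' (b, ⟨k, hk⟩) : ℤ) - a (b, ⟨k, hk⟩) =
      (-1 : ℤ) ^ k * ((a' (b, ⟨0, h0⟩) : ℤ) - a (b, ⟨0, h0⟩)) := by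
  intro k
  induction k with
  | zero => intro hk; simp
  | succ k ih =>
    intro hk
    have hrel := congrFun h (b, ⟨k + 1, hk⟩)
    simp only [Fmap] at hrel
    have hprv : prv (⟨k + 1, hk⟩ : Fin (2 * q)) = ⟨k, Nat.lt_of_succ_lt hk⟩ := by
      apply Fin.ext
      rw [prv_val]
      simp
    rw [hprv] at hrel
    have ihk := ih (Nat.lt_of_succ_lt hk)
    rw [pow_succ]
    linarith

lemma fmap_inj_on_canon {t : ℕ} {a a' : VV q → ℕ} (ha : a ∈ CanonSet q t)
    (ha' : a' ∈ CanonSet q t) (h : Fmap q a = Fmap q a') : a = a' := by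
  have h0 : 0 < 2 * q := by
    rcases ha.2 0 with ⟨i, _, _⟩
    exact i.pos
  have key : ∀ b : Fin 2, ∀ i : Fin (2 * q), a (b, i) = a' (b, i) := by
    intro b
    set lam : ℤ := (a' (b, ⟨0, h0⟩) : ℤ) - a (b, ⟨0, h0⟩) with hlam
    obtain ⟨i1, hi1odd, hi1z⟩ := ha.2 b
    obtain ⟨i2, hi2odd, hi2z⟩ := ha'.2 b
    have hd1 := walk_diff h b h0 i1.val i1.isLt
    have hd2 := walk_diff h b h0 i2.val i2.isLt
    rw [Fin.eta] at hd1 hd2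
    have hodd1 : (-1 : ℤ) ^ (i1.val) = -1 := (Nat.odd_iff.mpr hi1odd).neg_one_pow
    have hodd2 : (-1 : ℤ) ^ (i2.val) = -1 := (Nat.odd_iff.mpr hi2odd).neg_one_pow
    rw [hodd1, hi1z] at hd1
    rw [hodd2, hi2z] at hd2
    have hle1 : (0 : ℤ) ≤ a' (b, i1) := by positivity
    have hle2 : (0 : ℤ) ≤ a (b, i2) := by positivity
    have hlam0 : lam = 0 := by
      omega
    intro i
    have hd := walk_diff h b h0 i.val i.isLt
    rw [Fin.eta] at hd
    rw [← hlam, hlam0, mul_zero] at hd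
    omega
  funext p
  have := key p.1 p.2
  rwa [Prod.mk.eta] at this

lemma count_odd_range (m : ℕ) :
    #((Finset.range (2 * m)).filter (fun k => k % 2 = 1)) = m ∧
    #((Finset.range (2 * m)).filter (fun k => ¬ k % 2 = 1)) = m := by
  induction m with
  | zero => simp
  | succ m ih =>
    have h2 : 2 * (m + 1) = (2 * m + 1) + 1 := by ring
    rw [h2, Finset.range_add_one, Finset.range_add_one, Finset.filter_insert, Finset.filter_insert,
      Finset.filter_insert, Finset.filter_insert]
    constructor
    · rw [if_pos (by omega : (2 * m + 1) % 2 = 1), if_neg (by omega : ¬ (2 * m) % 2 = 1)]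
      rw [Finset.card_insert_of_notMem (by simp)]
      rw [ih.1]
    · rw [if_neg (by omega : ¬ ¬ (2 * m + 1) % 2 = 1), if_pos (by omega : ¬ (2 * m) % 2 = 1)]
      rw [Finset.card_insert_of_notMem (by simp)]
      rw [ih.2]

lemma count_fin_aux (P : ℕ → Prop) [DecidablePred P] :
    #((Finset.univ : Finset (Fin (2 * q))).filter (fun i => P i.val)) =
      #((Finset.range (2 * q)).filter P) := by
  apply Finset.card_bij (fun (i : Fin (2 * q)) _ => i.val)
  · intro i hi
    rw [Finset.mem_filter, Finset.mem_range]
    exact ⟨i.isLt, (Finset.mem_filter.mp hi).2⟩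
  · intro i _ j _ hij
    exact Fin.ext hij
  · intro k hk
    rw [Finset.mem_filter, Finset.mem_range] at hk
    exact ⟨⟨k, hk.1⟩, Finset.mem_filter.mpr ⟨Finset.mem_univ _, hk.2⟩, rfl⟩

lemma count_odd_fin (hq : 0 < q) :
    #((Finset.univ : Finset (Fin (2 * q))).filter (fun i => i.val % 2 = 1)) = q := by
  rw [count_fin_aux (fun k => k % 2 = 1), (count_odd_range q).1]

lemma count_even_fin (hq : 0 < q) :
    #((Finset.univ : Finset (Fin (2 * q))).filter (fun i => ¬ i.val % 2 = 1)) = q := by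
  rw [count_fin_aux (fun k => ¬ k % 2 = 1), (count_odd_range q).2]

lemma normalizeTuple (hq : 1 ≤ q) (a0 : VV q → ℕ) :
    ∃ a : VV q → ℕ, Fmap q a = Fmap q a0 ∧ (∑ p, a p = ∑ p, a0 p) ∧
      (∀ b : Fin 2, ∃ i : Fin (2 * q), i.val % 2 = 1 ∧ a (b, i) = 0) := by
  classical
  set Odds : Finset (Fin (2 * q)) := Finset.univ.filter (fun i => i.val % 2 = 1) with hOdds
  have hOne : (⟨1, by omega⟩ : Fin (2 * q)) ∈ Odds := by
    rw [hOdds, Finset.mem_filter]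
    exact ⟨Finset.mem_univ _, by norm_num⟩
  have hne : Odds.Nonempty := ⟨_, hOne⟩
  set lam : Fin 2 → ℕ := fun b => Odds.inf' hne (fun i => a0 (b, i)) with hlam
  have hlam_le : ∀ b, ∀ i ∈ Odds, lam b ≤ a0 (b, i) := fun b i hi =>
    Finset.inf'_le _ hi
  set a : VV q → ℕ := fun p =>
    if p.2.val % 2 = 1 then a0 p - lam p.1 else a0 p + lam p.1 with ha
  refine ⟨a, ?_, ?_, ?_⟩
  · funext v
    simp only [Fmap, ha]
    have hpar := prv_parity (q := q) v.2
    have hmem : ∀ i : Fin (2 * q), i.val % 2 = 1 → (v.1, i).2.val % 2 = 1 := fun i h => h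
    by_cases hv : v.2.val % 2 = 1
    · have hp : ¬ (prv v.2).val % 2 = 1 := by omega
      rw [if_pos hv, if_neg hp]
      have hle := hlam_le v.1 v.2 (by rw [hOdds, Finset.mem_filter]; exact ⟨Finset.mem_univ _, hv⟩)
      push_cast [Nat.cast_sub hle]
      ring
    · have hp : (prv v.2).val % 2 = 1 := by omega
      rw [if_neg hv, if_pos hp]
      have hle := hlam_le v.1 (prv v.2)
        (by rw [hOdds, Finset.mem_filter]; exact ⟨Finset.mem_univ _, hp⟩)
      push_cast [Nat.cast_sub hle]
      ring
  · have hsum : ∀ b : Fin 2, ∑ i : Fin (2 * q), a (b, i) = ∑ i : Fin (2 * q), a0 (b, i) := by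
      intro b
      have hz : (∑ i : Fin (2 * q), (a (b, i) : ℤ)) = ∑ i : Fin (2 * q), (a0 (b, i) : ℤ) := by
        rw [← Finset.sum_filter_add_sum_filter_not Finset.univ (fun i : Fin (2*q) => i.val % 2 = 1)
          (fun i => (a (b, i) : ℤ)),
          ← Finset.sum_filter_add_sum_filter_not Finset.univ (fun i : Fin (2*q) => i.val % 2 = 1)
          (fun i => (a0 (b, i) : ℤ))]
        have e1 : ∀ i ∈ Finset.univ.filter (fun i : Fin (2*q) => i.val % 2 = 1),
            (a (b, i) : ℤ) = (a0 (b, i) : ℤ) - lam b := by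
          intro i hi
          have hio : i.val % 2 = 1 := (Finset.mem_filter.mp hi).2
          simp only [ha, if_pos hio]
          have hle := hlam_le b i hi
          push_cast [Nat.cast_sub hle]
          ring
        have e2 : ∀ i ∈ Finset.univ.filter (fun i : Fin (2*q) => ¬ i.val % 2 = 1),
            (a (b, i) : ℤ) = (a0 (b, i) : ℤ) + lam b := by
          intro i hi
          have hio := (Finset.mem_filter.mp hi).2
          simp only [ha, if_neg hio]
          push_cast
          ring
        rw [Finset.sum_congr rfl e1, Finset.sum_congr rfl e2,
          Finset.sum_sub_distrib, Finset.sum_add_distrib, Finset.sum_const, Finset.sum_const,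
          count_odd_fin (by omega), count_even_fin (by omega)]
        ring
      exact_mod_cast hz
    rw [Fintype.sum_prod_type, Fintype.sum_prod_type]
    exact Finset.sum_congr rfl (fun b _ => hsum b)
  · intro b
    obtain ⟨i, hi, hmin⟩ := Finset.exists_mem_eq_inf' hne (fun i => a0 (b, i))
    refine ⟨i, (Finset.mem_filter.mp hi).2, ?_⟩
    simp only [ha, if_pos (Finset.mem_filter.mp hi).2]
    have hlb : lam b = a0 (b, i) := hmin
    omega

end Canon

section Counting

/-- Stars and bars: the number of `α`-tuples of naturals with sum `t`. -/
lemma card_sum_fixed (α : Type) [Fintype α] [DecidableEq α] (t : ℕ) :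
    Nat.card {a : α → ℕ | ∑ p, a p = t} = ((Fintype.card α).multichoose t) := by
  have e1 : Sym α t ≃ {a : α → ℕ | ∑ p, a p = t} := Sym.equivNatSumOfFintype α t
  rw [← Nat.card_congr e1, Nat.card_eq_fintype_card, Sym.card_sym_eq_multichoose]

variable {q : ℕ}

/-- the lattice point set of the `t`-th dilate -/
def latticeSet (q t : ℕ) : Set (VV q → ℤ) :=
  {x | (fun v => (x v : ℝ)) ∈ (t : ℝ) • edgePolytope (twoCyclesGraph (2 * q))}

lemma card_lattice_eq_canon (hq : 2 ≤ q) {t : ℕ} (ht : 1 ≤ t) :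
    Nat.card (latticeSet q t) = Nat.card (CanonSet q t) := by
  symm
  have hmem : ∀ a : VV q → ℕ, a ∈ CanonSet q t → Fmap q a ∈ latticeSet q t := by
    intro a ha
    exact (lattice_mem hq ht (Fmap q a)).mpr ⟨a, ha.1, fun v => rfl⟩
  apply Nat.card_eq_of_bijective
    (fun a : CanonSet q t => (⟨Fmap q a.1, hmem a.1 a.2⟩ : latticeSet q t))
  constructor
  · intro a a' h
    exact Subtype.ext (fmap_inj_on_canon a.2 a'.2 (congrArg Subtype.val h))
  · rintro ⟨x, hx⟩
    obtain ⟨a0, ha0t, ha0x⟩ := (lattice_mem hq ht x).mp hx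
    obtain ⟨a, hafm, hasum, hacanon⟩ := normalizeTuple (by omega) a0
    refine ⟨⟨a, ⟨by rw [hasum, ha0t], hacanon⟩⟩, ?_⟩
    apply Subtype.ext
    show Fmap q a = x
    rw [hafm]
    funext v
    exact (ha0x v).symm

/-- the "all odd positions in block `b` positive" sets -/
def BadSet (q : ℕ) (b : Fin 2) (t : ℕ) : Set (VV q → ℕ) :=
  {a | (∑ p, a p = t) ∧ ∀ i : Fin (2 * q), i.val % 2 = 1 → 1 ≤ a (b, i)}

def Bad2Set (q t : ℕ) : Set (VV q → ℕ) :=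
  {a | (∑ p, a p = t) ∧ ∀ (b : Fin 2) (i : Fin (2 * q)), i.val % 2 = 1 → 1 ≤ a (b, i)}

def SumSet (q t : ℕ) : Set (VV q → ℕ) := {a | ∑ p, a p = t}

lemma sum_ind_block (hq : 1 ≤ q) (b : Fin 2) :
    ∑ p : VV q, (if p.1 = b ∧ p.2.val % 2 = 1 then 1 else 0) = q := by
  rw [Fintype.sum_prod_type]
  have hinner : ∀ b' : Fin 2, (∑ i : Fin (2 * q), if b' = b ∧ i.val % 2 = 1 then 1 else 0)
      = if b' = b then q else 0 := by
    intro b'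
    by_cases hb : b' = b
    · rw [if_pos hb]
      have : ∀ i : Fin (2 * q), (if b' = b ∧ i.val % 2 = 1 then 1 else 0)
          = (if i.val % 2 = 1 then 1 else 0) := by
        intro i
        by_cases hi : i.val % 2 = 1
        · rw [if_pos ⟨hb, hi⟩, if_pos hi]
        · rw [if_neg (fun hc => hi hc.2), if_neg hi]
      rw [Finset.sum_congr rfl (fun i _ => this i), ← Finset.card_filter,
        count_odd_fin (by omega)]
    · rw [if_neg hb]
      apply Finset.sum_eq_zero
      intro i _
      rw [if_neg (fun hc => hb hc.1)]
  rw [Finset.sum_congr rfl (fun b' _ => hinner b')]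
  rw [Finset.sum_ite_eq' Finset.univ b (fun _ => q)]
  rw [if_pos (Finset.mem_univ b)]

lemma sum_ind_all (hq : 1 ≤ q) :
    ∑ p : VV q, (if p.2.val % 2 = 1 then 1 else 0) = 2 * q := by
  rw [Fintype.sum_prod_type]
  have hinner : ∀ b' : Fin 2, (∑ i : Fin (2 * q), if i.val % 2 = 1 then 1 else 0) = q := by
    intro b'
    rw [← Finset.card_filter, count_odd_fin (by omega)]
  rw [Finset.sum_congr rfl (fun b' _ => hinner b'), Finset.sum_const, Finset.card_univ]
  simp [two_mul]

lemma card_bad_eq (hq : 1 ≤ q) (b : Fin 2) {t : ℕ} (htq : q ≤ t) :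
    Nat.card (BadSet q b t) = Nat.card (SumSet q (t - q)) := by
  symm
  have hmem : ∀ a : VV q → ℕ, a ∈ SumSet q (t - q) →
      (fun p => a p + (if p.1 = b ∧ p.2.val % 2 = 1 then 1 else 0)) ∈ BadSet q b t := by
    intro a ha
    constructor
    · rw [Finset.sum_add_distrib, ha, sum_ind_block hq b]
      omega
    · intro i hi
      show 1 ≤ a (b, i) + (if ((b, i) : VV q).1 = b ∧ ((b, i) : VV q).2.val % 2 = 1 then 1 else 0)
      rw [if_pos (show ((b, i) : VV q).1 = b ∧ ((b, i) : VV q).2.val % 2 = 1 from ⟨rfl, hi⟩)]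
      omega
  apply Nat.card_eq_of_bijective
    (fun a : SumSet q (t - q) =>
      (⟨fun p => a.1 p + (if p.1 = b ∧ p.2.val % 2 = 1 then 1 else 0), hmem a.1 a.2⟩ :
        BadSet q b t))
  constructor
  · intro a a' h
    apply Subtype.ext
    funext p
    have := congrFun (congrArg Subtype.val h) p
    simp only at this
    omega
  · rintro ⟨x, hx1, hx2⟩
    have hle : ∀ p : VV q, (if p.1 = b ∧ p.2.val % 2 = 1 then 1 else 0) ≤ x p := by
      intro p
      split_ifs with h
      · rcases h with ⟨h1, h2⟩
        have := hx2 p.2 h2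
        rw [← h1] at this
        simpa using this
      · omega
    refine ⟨⟨fun p => x p - (if p.1 = b ∧ p.2.val % 2 = 1 then 1 else 0), ?_⟩, ?_⟩
    · show (∑ p : VV q, (x p - _)) = t - q
      have : ∑ p : VV q, (x p - (if p.1 = b ∧ p.2.val % 2 = 1 then 1 else 0))
          + ∑ p : VV q, (if p.1 = b ∧ p.2.val % 2 = 1 then 1 else 0)
          = ∑ p : VV q, x p := by
        rw [← Finset.sum_add_distrib]
        apply Finset.sum_congr rfl
        intro p _
        have := hle p
        omega
      rw [sum_ind_block hq b, hx1] at this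
      omega
    · apply Subtype.ext
      funext p
      have := hle p
      simp only
      omega

lemma card_bad2_eq (hq : 1 ≤ q) {t : ℕ} (htq : 2 * q ≤ t) :
    Nat.card (Bad2Set q t) = Nat.card (SumSet q (t - 2 * q)) := by
  symm
  have hmem : ∀ a : VV q → ℕ, a ∈ SumSet q (t - 2 * q) →
      (fun p => a p + (if p.2.val % 2 = 1 then 1 else 0)) ∈ Bad2Set q t := by
    intro a ha
    constructor
    · rw [Finset.sum_add_distrib, ha, sum_ind_all hq]
      omega
    · intro b i hi
      show 1 ≤ a (b, i) + (if ((b, i) : VV q).2.val % 2 = 1 then 1 else 0)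
      rw [if_pos (hi : ((b, i) : VV q).2.val % 2 = 1)]
      omega
  apply Nat.card_eq_of_bijective
    (fun a : SumSet q (t - 2 * q) =>
      (⟨fun p => a.1 p + (if p.2.val % 2 = 1 then 1 else 0), hmem a.1 a.2⟩ : Bad2Set q t))
  constructor
  · intro a a' h
    apply Subtype.ext
    funext p
    have := congrFun (congrArg Subtype.val h) p
    simp only at this
    omega
  · rintro ⟨x, hx1, hx2⟩
    have hle : ∀ p : VV q, (if p.2.val % 2 = 1 then 1 else 0) ≤ x p := by
      intro p
      split_ifs with h
      · have := hx2 p.1 p.2 h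
        rw [Prod.mk.eta] at this
        exact this
      · omega
    refine ⟨⟨fun p => x p - (if p.2.val % 2 = 1 then 1 else 0), ?_⟩, ?_⟩
    · show (∑ p : VV q, (x p - _)) = t - 2 * q
      have : ∑ p : VV q, (x p - (if p.2.val % 2 = 1 then 1 else 0))
          + ∑ p : VV q, (if p.2.val % 2 = 1 then 1 else 0)
          = ∑ p : VV q, x p := by
        rw [← Finset.sum_add_distrib]
        apply Finset.sum_congr rfl
        intro p _
        have := hle p
        omega
      rw [sum_ind_all hq, hx1] at this
      omega
    · apply Subtype.ext
      funext p
      have := hle p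
      simp only
      omega

end Counting

section InclExcl
variable {q : ℕ}

lemma sumset_finite (t : ℕ) : (SumSet q t).Finite := by
  apply Set.Finite.subset (Set.Finite.pi (fun p : VV q => Set.finite_Iic t))
  intro a ha
  rw [Set.mem_pi]
  intro p _
  rw [Set.mem_Iic, ← ha]
  exact Finset.single_le_sum (f := a) (fun i _ => Nat.zero_le _) (Finset.mem_univ p)

lemma bad_subset (b : Fin 2) (t : ℕ) : BadSet q b t ⊆ SumSet q t := fun a ha => ha.1

lemma canon_eq_diff (t : ℕ) :
    CanonSet q t = SumSet q t \ (BadSet q 0 t ∪ BadSet q 1 t) := by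
  ext a
  constructor
  · rintro ⟨hs, hc⟩
    refine ⟨hs, ?_⟩
    rintro (hb | hb)
    · obtain ⟨i, hio, hiz⟩ := hc 0
      have := hb.2 i hio
      omega
    · obtain ⟨i, hio, hiz⟩ := hc 1
      have := hb.2 i hio
      omega
  · rintro ⟨hs, hb⟩
    refine ⟨hs, ?_⟩
    intro b
    by_contra hcon
    push_neg at hcon
    apply hb
    have hball : ∀ i : Fin (2 * q), i.val % 2 = 1 → 1 ≤ a (b, i) := by
      intro i hi
      have := hcon i hi
      omega
    fin_cases b
    · exact Or.inl ⟨hs, hball⟩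
    · exact Or.inr ⟨hs, hball⟩

lemma bad_inter (t : ℕ) : BadSet q 0 t ∩ BadSet q 1 t = Bad2Set q t := by
  ext a
  constructor
  · rintro ⟨⟨hs, h0⟩, ⟨_, h1⟩⟩
    refine ⟨hs, ?_⟩
    intro b
    fin_cases b
    · exact h0
    · exact h1
  · rintro ⟨hs, h⟩
    exact ⟨⟨hs, h 0⟩, ⟨hs, h 1⟩⟩

lemma bad_empty (hq : 1 ≤ q) (b : Fin 2) {t : ℕ} (ht : t < q) : BadSet q b t = ∅ := by
  ext a
  simp only [Set.mem_empty_iff_false, iff_false]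
  rintro ⟨hs, hb⟩
  set S : Finset (VV q) := Finset.univ.filter (fun p => p.1 = b ∧ p.2.val % 2 = 1) with hS
  have hcard : #S = q := by
    rw [hS, Finset.card_filter, sum_ind_block hq b]
  have hge : q ≤ t := by
    calc q = #S := hcard.symm
    _ = ∑ _p ∈ S, 1 := by rw [Finset.card_eq_sum_ones]
    _ ≤ ∑ p ∈ S, a p := by
        apply Finset.sum_le_sum
        intro p hp
        obtain ⟨h1, h2⟩ := (Finset.mem_filter.mp hp).2
        have := hb p.2 h2
        rw [← h1, Prod.mk.eta] at this
        exact this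
    _ ≤ ∑ p, a p := Finset.sum_le_sum_of_subset (Finset.subset_univ S)
    _ = t := hs
  omega

lemma bad2_empty (hq : 1 ≤ q) {t : ℕ} (ht : t < 2 * q) : Bad2Set q t = ∅ := by
  ext a
  simp only [Set.mem_empty_iff_false, iff_false]
  rintro ⟨hs, hb⟩
  set S : Finset (VV q) := Finset.univ.filter (fun p => p.2.val % 2 = 1) with hS
  have hcard : #S = 2 * q := by
    rw [hS, Finset.card_filter, sum_ind_all hq]
  have hge : 2 * q ≤ t := by
    calc 2 * q = #S := hcard.symm
    _ = ∑ _p ∈ S, 1 := by rw [Finset.card_eq_sum_ones]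
    _ ≤ ∑ p ∈ S, a p := by
        apply Finset.sum_le_sum
        intro p hp
        have h2 := (Finset.mem_filter.mp hp).2
        have := hb p.1 p.2 h2
        rw [Prod.mk.eta] at this
        exact this
    _ ≤ ∑ p, a p := Finset.sum_le_sum_of_subset (Finset.subset_univ S)
    _ = t := hs
  omega

lemma card_sumset (hq : 1 ≤ q) (s : ℕ) :
    Nat.card (SumSet q s) = (s + (4 * q - 1)).choose (4 * q - 1) := by
  have h1 : Nat.card (SumSet q s) = (Fintype.card (VV q)).multichoose s :=
    card_sum_fixed (VV q) s
  have h2 : Fintype.card (VV q) = 4 * q := by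
    rw [Fintype.card_prod, Fintype.card_fin, Fintype.card_fin]
    ring
  rw [h1, h2, Nat.multichoose_eq]
  have h3 : 4 * q + s - 1 = s + (4 * q - 1) := by omega
  rw [h3]
  exact Nat.choose_symm_of_eq_add (by omega)

lemma card_canon (hq : 1 ≤ q) (t : ℕ) :
    (Nat.card (CanonSet q t) : ℤ) =
      ((t + (4 * q - 1)).choose (4 * q - 1) : ℤ)
      - 2 * ((t + (3 * q - 1)).choose (4 * q - 1))
      + ((t + (2 * q - 1)).choose (4 * q - 1)) := by
  classical
  have hfinS := sumset_finite (q := q) t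
  have hfin0 : (BadSet q 0 t).Finite := hfinS.subset (bad_subset 0 t)
  have hfin1 : (BadSet q 1 t).Finite := hfinS.subset (bad_subset 1 t)
  have hU : (BadSet q 0 t ∪ BadSet q 1 t) ⊆ SumSet q t :=
    Set.union_subset (bad_subset 0 t) (bad_subset 1 t)
  have f1 : (CanonSet q t).ncard + (BadSet q 0 t ∪ BadSet q 1 t).ncard
      = (SumSet q t).ncard := by
    rw [canon_eq_diff]
    exact Set.ncard_diff_add_ncard_of_subset hU hfinS
  have f2 : (BadSet q 0 t ∪ BadSet q 1 t).ncard + (Bad2Set q t).ncard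
      = (BadSet q 0 t).ncard + (BadSet q 1 t).ncard := by
    rw [← bad_inter]
    exact Set.ncard_union_add_ncard_inter _ _ hfin0 hfin1
  have hcoe : ∀ s : Set (VV q → ℕ), s.ncard = Nat.card s := fun s =>
    (Nat.card_coe_set_eq s).symm
  have hNB : ∀ b : Fin 2, (BadSet q b t).ncard
      = ((t + (3 * q - 1)).choose (4 * q - 1)) := by
    intro b
    by_cases htq : q ≤ t
    · rw [hcoe, card_bad_eq hq b htq, card_sumset hq]
      congr 1
      omega
    · rw [bad_empty hq b (by omega), Set.ncard_empty]
      symm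
      exact Nat.choose_eq_zero_of_lt (by omega)
  have hNB2 : (Bad2Set q t).ncard = ((t + (2 * q - 1)).choose (4 * q - 1)) := by
    by_cases htq : 2 * q ≤ t
    · rw [hcoe, card_bad2_eq hq htq, card_sumset hq]
      congr 1
      omega
    · rw [bad2_empty hq (by omega), Set.ncard_empty]
      symm
      exact Nat.choose_eq_zero_of_lt (by omega)
  have hNA : (SumSet q t).ncard = ((t + (4 * q - 1)).choose (4 * q - 1)) := by
    rw [hcoe, card_sumset hq]
  have hC : Nat.card (CanonSet q t) = (CanonSet q t).ncard := Nat.card_coe_set_eq _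
  rw [hC]
  rw [hNB 0, hNB 1] at f2
  rw [hNA] at f1
  rw [hNB2] at f2
  omega

end InclExcl

section Ehrhart
variable {q : ℕ}

lemma ehrhart_formula (hq : 2 ≤ q) (t : ℕ) :
    ehrhart (edgePolytope (twoCyclesGraph (2 * q))) t =
      ((t + (4 * q - 1)).choose (4 * q - 1) : ℤ)
      - 2 * ((t + (3 * q - 1)).choose (4 * q - 1))
      + ((t + (2 * q - 1)).choose (4 * q - 1)) := by
  rcases Nat.eq_zero_or_pos t with h0 | hpos
  · subst h0
    rw [ehrhart, if_pos rfl]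
    rw [Nat.zero_add, Nat.zero_add, Nat.zero_add, Nat.choose_self,
      Nat.choose_eq_zero_of_lt (by omega), Nat.choose_eq_zero_of_lt (by omega)]
    norm_num
  · rw [ehrhart, if_neg (by omega)]
    have hset : {x : VV q → ℤ |
        (fun v => (x v : ℝ)) ∈ (t : ℝ) • edgePolytope (twoCyclesGraph (2 * q))}
        = latticeSet q t := rfl
    rw [hset, card_lattice_eq_canon hq hpos, card_canon (by omega) t]
end Ehrhart

/-- The core binomial identity: `∑ j (-1)^j C(m,j) C(i-j+m+p-1, m+p-1) = C(i+p-1, p-1)`. -/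
lemma core_sum : ∀ (m p i : ℕ), 1 ≤ p →
    (∑ j ∈ Finset.range (i + 1), (-1 : ℤ) ^ j * (Nat.choose m j) *
      (((i - j) + (m + p - 1)).choose (m + p - 1) : ℕ))
    = ((i + (p - 1)).choose (p - 1) : ℕ) := by
  intro m
  induction m with
  | zero =>
    intro p i hp
    rw [Finset.sum_eq_single 0]
    · rw [pow_zero, Nat.choose_zero_right, Nat.sub_zero, Nat.zero_add]
      push_cast
      ring
    · intro j _ hj
      rw [Nat.choose_eq_zero_of_lt (by omega : 0 < j)]
      push_cast
      ring
    · intro h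
      exact absurd (Finset.mem_range.mpr (by omega)) h
  | succ m ih =>
    intro p i hp
    cases i with
    | zero =>
      rw [Finset.sum_range_one]
      rw [pow_zero, Nat.choose_zero_right, Nat.sub_zero, Nat.zero_add, Nat.zero_add,
        Nat.choose_self, Nat.choose_self]
      norm_num
    | succ i' =>
      have hA1 : m + 1 + p - 1 = m + p := by omega
      have hA2 : m + (p + 1) - 1 = m + p := by omega
      have IH1 := ih (p + 1) (i' + 1) (by omega)
      have IH2 := ih (p + 1) i' (by omega)
      rw [hA2] at IH1 IH2
      rw [Nat.add_sub_cancel] at IH1 IH2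
      rw [hA1]
      rw [Finset.sum_range_succ'] at IH1 ⊢
      have hsplit : ∀ j ∈ Finset.range (i' + 1),
          (-1 : ℤ) ^ (j + 1) * (Nat.choose (m + 1) (j + 1)) *
            (((i' + 1 - (j + 1)) + (m + p)).choose (m + p) : ℕ)
          = (-1 : ℤ) ^ (j + 1) * (Nat.choose m (j + 1)) *
              (((i' + 1 - (j + 1)) + (m + p)).choose (m + p) : ℕ)
            - (-1 : ℤ) ^ j * (Nat.choose m j) *
              (((i' - j) + (m + p)).choose (m + p) : ℕ) := by
        intro j _
        rw [Nat.choose_succ_succ, Nat.succ_sub_succ]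
        push_cast
        ring
      rw [Finset.sum_congr rfl hsplit, Finset.sum_sub_distrib]
      have hzero : ((-1 : ℤ) ^ (0:ℕ) * (Nat.choose (m + 1) 0) *
          (((i' + 1 - 0) + (m + p)).choose (m + p) : ℕ))
          = ((-1 : ℤ) ^ (0:ℕ) * (Nat.choose m 0) *
          (((i' + 1 - 0) + (m + p)).choose (m + p) : ℕ)) := by
        rw [Nat.choose_zero_right, Nat.choose_zero_right]
      rw [hzero]
      -- IH1 (after peeling) : ∑_{j<i'+1} term(j+1) + term0 = C(i'+1+p, p)
      -- IH2 : ∑_{j<i'+1} (…) = C(i'+p, p)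
      have pascal : ((i' + 1 + (p - 1)).choose (p - 1) : ℤ)
          = ((i' + 1 + p).choose p : ℤ) - ((i' + p).choose p : ℤ) := by
        obtain ⟨r, rfl⟩ : ∃ r, p = r + 1 := ⟨p - 1, by omega⟩
        rw [Nat.add_sub_cancel]
        have h3 : (i' + 1 + (r + 1)).choose (r + 1)
            = (i' + 1 + r).choose r + (i' + 1 + r).choose (r + 1) := by
          have he : i' + 1 + (r + 1) = (i' + 1 + r) + 1 := by omega
          rw [he]
          exact Nat.choose_succ_succ _ _
        have h4 : i' + (r + 1) = i' + 1 + r := by omega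
        rw [h3, h4]
        push_cast
        ring
      rw [pascal, ← IH1, ← IH2]
      ring

section HStar
variable {q : ℕ}

lemma sumA (hq : 1 ≤ q) (i : ℕ) :
    (∑ j ∈ Finset.range (i + 1), (-1 : ℤ) ^ j * (Nat.choose (4 * q - 2) j) *
      (((i - j) + (4 * q - 1)).choose (4 * q - 1) : ℕ)) = (i : ℤ) + 1 := by
  have h := core_sum (4 * q - 2) 2 i (by omega)
  have h1 : 4 * q - 2 + 2 - 1 = 4 * q - 1 := by omega
  rw [h1] at h
  rw [h]
  norm_num [Nat.choose_one_right]

lemma sumB (hq : 1 ≤ q) (i : ℕ) :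
    (∑ j ∈ Finset.range (i + 1), (-1 : ℤ) ^ j * (Nat.choose (4 * q - 2) j) *
      (((i - j) + (3 * q - 1)).choose (4 * q - 1) : ℕ))
      = if q ≤ i then (i : ℤ) - q + 1 else 0 := by
  by_cases hqi : q ≤ i
  · rw [if_pos hqi]
    set i' := i - q with hi'
    have hsub : Finset.range (i' + 1) ⊆ Finset.range (i + 1) :=
      Finset.range_subset_range.mpr (by omega)
    have hzero : ∀ j ∈ Finset.range (i + 1), j ∉ Finset.range (i' + 1) →
        (-1 : ℤ) ^ j * (Nat.choose (4 * q - 2) j) *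
          (((i - j) + (3 * q - 1)).choose (4 * q - 1) : ℕ) = 0 := by
      intro j hj hj'
      rw [Finset.mem_range] at hj hj'
      rw [Nat.choose_eq_zero_of_lt (by omega : (i - j) + (3 * q - 1) < 4 * q - 1)]
      push_cast
      ring
    rw [← Finset.sum_subset hsub hzero]
    have hcongr : ∀ j ∈ Finset.range (i' + 1),
        (-1 : ℤ) ^ j * (Nat.choose (4 * q - 2) j) *
          (((i - j) + (3 * q - 1)).choose (4 * q - 1) : ℕ)
        = (-1 : ℤ) ^ j * (Nat.choose (4 * q - 2) j) *
          (((i' - j) + (4 * q - 1)).choose (4 * q - 1) : ℕ) := by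
      intro j hj
      rw [Finset.mem_range] at hj
      have : (i - j) + (3 * q - 1) = (i' - j) + (4 * q - 1) := by omega
      rw [this]
    rw [Finset.sum_congr rfl hcongr, sumA hq i']
    have : (i' : ℤ) = (i : ℤ) - q := by
      rw [hi']
      push_cast [Nat.cast_sub hqi]
      ring
    rw [this]
  · rw [if_neg hqi]
    apply Finset.sum_eq_zero
    intro j hj
    rw [Nat.choose_eq_zero_of_lt (by omega : (i - j) + (3 * q - 1) < 4 * q - 1)]
    push_cast
    ring

lemma sumC (hq : 1 ≤ q) (i : ℕ) :
    (∑ j ∈ Finset.range (i + 1), (-1 : ℤ) ^ j * (Nat.choose (4 * q - 2) j) *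
      (((i - j) + (2 * q - 1)).choose (4 * q - 1) : ℕ))
      = if 2 * q ≤ i then (i : ℤ) - 2 * q + 1 else 0 := by
  by_cases hqi : 2 * q ≤ i
  · rw [if_pos hqi]
    set i' := i - 2 * q with hi'
    have hsub : Finset.range (i' + 1) ⊆ Finset.range (i + 1) :=
      Finset.range_subset_range.mpr (by omega)
    have hzero : ∀ j ∈ Finset.range (i + 1), j ∉ Finset.range (i' + 1) →
        (-1 : ℤ) ^ j * (Nat.choose (4 * q - 2) j) *
          (((i - j) + (2 * q - 1)).choose (4 * q - 1) : ℕ) = 0 := by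
      intro j hj hj'
      rw [Finset.mem_range] at hj hj'
      rw [Nat.choose_eq_zero_of_lt (by omega : (i - j) + (2 * q - 1) < 4 * q - 1)]
      push_cast
      ring
    rw [← Finset.sum_subset hsub hzero]
    have hcongr : ∀ j ∈ Finset.range (i' + 1),
        (-1 : ℤ) ^ j * (Nat.choose (4 * q - 2) j) *
          (((i - j) + (2 * q - 1)).choose (4 * q - 1) : ℕ)
        = (-1 : ℤ) ^ j * (Nat.choose (4 * q - 2) j) *
          (((i' - j) + (4 * q - 1)).choose (4 * q - 1) : ℕ) := by
      intro j hj
      rw [Finset.mem_range] at hj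
      have : (i - j) + (2 * q - 1) = (i' - j) + (4 * q - 1) := by omega
      rw [this]
    rw [Finset.sum_congr rfl hcongr, sumA hq i']
    have : (i' : ℤ) = (i : ℤ) - 2 * q := by
      rw [hi']
      push_cast [Nat.cast_sub hqi]
      ring
    rw [this]
  · rw [if_neg hqi]
    apply Finset.sum_eq_zero
    intro j hj
    rw [Nat.choose_eq_zero_of_lt (by omega : (i - j) + (2 * q - 1) < 4 * q - 1)]
    push_cast
    ring

lemma hstar_val (hq : 2 ≤ q) (i : ℕ) :
    hstarCoeff (edgePolytope (twoCyclesGraph (2 * q))) (4 * q - 3) i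
      = ((i : ℤ) + 1) - 2 * (if q ≤ i then (i : ℤ) - q + 1 else 0)
        + (if 2 * q ≤ i then (i : ℤ) - 2 * q + 1 else 0) := by
  rw [hstarCoeff]
  have hd : 4 * q - 3 + 1 = 4 * q - 2 := by omega
  rw [hd]
  have hterm : ∀ j ∈ Finset.range (i + 1),
      (-1 : ℤ) ^ j * (Nat.choose (4 * q - 2) j) *
        ehrhart (edgePolytope (twoCyclesGraph (2 * q))) (i - j)
      = (-1 : ℤ) ^ j * (Nat.choose (4 * q - 2) j) *
          ((((i - j) + (4 * q - 1)).choose (4 * q - 1) : ℕ))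
        - 2 * ((-1 : ℤ) ^ j * (Nat.choose (4 * q - 2) j) *
          ((((i - j) + (3 * q - 1)).choose (4 * q - 1) : ℕ)))
        + (-1 : ℤ) ^ j * (Nat.choose (4 * q - 2) j) *
          ((((i - j) + (2 * q - 1)).choose (4 * q - 1) : ℕ)) := by
    intro j _
    rw [ehrhart_formula hq (i - j)]
    ring
  rw [Finset.sum_congr rfl hterm]
  rw [Finset.sum_add_distrib, Finset.sum_sub_distrib, ← Finset.mul_sum]
  rw [sumA (by omega) i, sumB (by omega) i, sumC (by omega) i]

lemma hstar_ne_iff (hq : 2 ≤ q) (i : ℕ) :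
    hstarCoeff (edgePolytope (twoCyclesGraph (2 * q))) (4 * q - 3) i ≠ 0 ↔ i ≤ 2 * q - 2 := by
  rw [hstar_val hq i]
  split_ifs with h1 h2 <;>
  · constructor
    · intro hne
      by_contra hcon
      apply hne
      push_neg at hcon
      have : (i : ℤ) ≥ 0 := Int.natCast_nonneg i
      omega
    · intro hle
      have hiz : (i : ℤ) ≤ 2 * q - 2 := by
        have : (i : ℤ) < 2 * q := by exact_mod_cast Nat.lt_of_le_of_lt hle (by omega)
        omega
      intro hcon
      omega

end HStar

section Dimension
variable {q : ℕ}

lemma eval_gvec (w : VV q → ℝ) (p : VV q) :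
    ∑ v : VV q, w v * gvec q p v = w (p.1, p.2) + w (p.1, nxt p.2) := by
  have hsplit : ∀ v : VV q, w v * gvec q p v =
      (if v = (p.1, p.2) then w v else 0) + (if v = (p.1, nxt p.2) then w v else 0) := by
    intro v
    rw [gvec_apply, mul_add, mul_ite, mul_one, mul_zero, mul_ite, mul_one, mul_zero]
  rw [Finset.sum_congr rfl (fun v _ => hsplit v), Finset.sum_add_distrib,
    Finset.sum_ite_eq' Finset.univ ((p.1, p.2) : VV q) w,
    Finset.sum_ite_eq' Finset.univ ((p.1, nxt p.2) : VV q) w]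
  simp

lemma neg_one_pow_nxt (hq : 1 ≤ q) (i : Fin (2 * q)) :
    ((-1 : ℝ)) ^ ((nxt i).val) = -((-1 : ℝ)) ^ (i.val) := by
  rw [nxt_val]
  split_ifs with h
  · rw [h, pow_zero]
    have hodd : Odd (2 * q - 1) := ⟨q - 1, by omega⟩
    rw [hodd.neg_one_pow]
    ring
  · rw [pow_succ]
    ring

variable (q) in
def wt3 : Fin 3 → VV q → ℝ := fun j p =>
  if j = 0 then (if p.1 = 0 then (-1 : ℝ) ^ (p.2.val) else 0)
  else if j = 1 then (if p.1 = 1 then (-1 : ℝ) ^ (p.2.val) else 0)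
  else 1

lemma wt3_0 (b : Fin 2) (i : Fin (2 * q)) :
    wt3 q 0 (b, i) = if b = 0 then (-1 : ℝ) ^ (i.val) else 0 := by
  simp [wt3]

lemma wt3_1 (b : Fin 2) (i : Fin (2 * q)) :
    wt3 q 1 (b, i) = if b = 1 then (-1 : ℝ) ^ (i.val) else 0 := by
  simp only [wt3]
  rw [if_neg (by decide : ¬ (1 : Fin 3) = 0)]
  simp

lemma wt3_2 (b : Fin 2) (i : Fin (2 * q)) : wt3 q 2 (b, i) = 1 := by
  simp only [wt3]
  rw [if_neg (by decide : ¬ (2 : Fin 3) = 0), if_neg (by decide : ¬ (2 : Fin 3) = 1)]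


variable (q) in
noncomputable def lamMap : (VV q → ℝ) →ₗ[ℝ] (Fin 3 → ℝ) where
  toFun := fun y j => ∑ v : VV q, wt3 q j v * y v
  map_add' := by
    intro y z
    funext j
    simp only [Pi.add_apply, mul_add, Finset.sum_add_distrib]
  map_smul' := by
    intro c y
    funext j
    simp only [Pi.smul_apply, smul_eq_mul, RingHom.id_apply, Finset.mul_sum]
    apply Finset.sum_congr rfl
    intro v _
    ring

lemma lamMap_apply (y : VV q → ℝ) (j : Fin 3) :
    lamMap q y j = ∑ v : VV q, wt3 q j v * y v := rfl

lemma lamMap_gvec0 (hq : 1 ≤ q) (p : VV q) : lamMap q (gvec q p) 0 = 0 := by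
  rw [lamMap_apply, eval_gvec, wt3_0, wt3_0]
  by_cases hb : p.1 = 0
  · rw [if_pos hb, if_pos hb, neg_one_pow_nxt hq]
    ring
  · rw [if_neg hb, if_neg hb]
    ring

lemma lamMap_gvec1 (hq : 1 ≤ q) (p : VV q) : lamMap q (gvec q p) 1 = 0 := by
  rw [lamMap_apply, eval_gvec, wt3_1, wt3_1]
  by_cases hb : p.1 = 1
  · rw [if_pos hb, if_pos hb, neg_one_pow_nxt hq]
    ring
  · rw [if_neg hb, if_neg hb]
    ring

lemma lamMap_gvec2 (p : VV q) : lamMap q (gvec q p) 2 = 2 := by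
  rw [lamMap_apply, eval_gvec, wt3_2, wt3_2]
  norm_num

lemma lamMap_indicator (a : VV q) (j : Fin 3) :
    lamMap q (fun v => if v = a then (1 : ℝ) else 0) j = wt3 q j a := by
  rw [lamMap_apply]
  have hterm : ∀ v : VV q, wt3 q j v * (if v = a then (1 : ℝ) else 0)
      = (if v = a then wt3 q j v else 0) := by
    intro v
    rw [mul_ite, mul_one, mul_zero]
  rw [Finset.sum_congr rfl (fun v _ => hterm v), Finset.sum_ite_eq' Finset.univ a (wt3 q j)]
  simp

lemma lamMap_surjective (hq : 1 ≤ q) : Function.Surjective (lamMap q) := by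
  intro u
  have h0 : (0 : ℕ) < 2 * q := by omega
  have h1lt : (1 : ℕ) < 2 * q := by omega
  set a1 : VV q := (0, ⟨0, h0⟩) with ha1
  set a1' : VV q := (0, ⟨1, h1lt⟩) with ha1'
  set a2 : VV q := (1, ⟨0, h0⟩) with ha2
  set d1 : VV q → ℝ := fun v => if v = a1 then (1 : ℝ) else 0 with hd1
  set d1' : VV q → ℝ := fun v => if v = a1' then (1 : ℝ) else 0 with hd1'
  set d2 : VV q → ℝ := fun v => if v = a2 then (1 : ℝ) else 0 with hd2
  set α : ℝ := (u 0 + u 2 - u 1) / 2 with hα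
  set β : ℝ := (u 2 - u 1 - u 0) / 2 with hβ
  refine ⟨α • d1 + β • d1' + (u 1) • d2, ?_⟩
  funext j
  have hexp : lamMap q (α • d1 + β • d1' + (u 1) • d2) j
      = α * wt3 q j a1 + β * wt3 q j a1' + u 1 * wt3 q j a2 := by
    rw [map_add, map_add, map_smul, map_smul, map_smul]
    rw [Pi.add_apply, Pi.add_apply, Pi.smul_apply, Pi.smul_apply, Pi.smul_apply]
    rw [hd1, hd1', hd2]
    rw [lamMap_indicator a1 j, lamMap_indicator a1' j, lamMap_indicator a2 j]
    simp [smul_eq_mul]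
  rw [hexp]
  have hv10 : wt3 q 0 a1 = 1 := by
    rw [ha1, wt3_0, if_pos rfl]
    norm_num
  have hv11 : wt3 q 1 a1 = 0 := by
    rw [ha1, wt3_1, if_neg (by decide : ¬ (0 : Fin 2) = 1)]
  have hv12 : wt3 q 2 a1 = 1 := by rw [ha1, wt3_2]
  have hv10' : wt3 q 0 a1' = -1 := by
    rw [ha1', wt3_0, if_pos rfl]
    norm_num
  have hv11' : wt3 q 1 a1' = 0 := by
    rw [ha1', wt3_1, if_neg (by decide : ¬ (0 : Fin 2) = 1)]
  have hv12' : wt3 q 2 a1' = 1 := by rw [ha1', wt3_2]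
  have hv20 : wt3 q 0 a2 = 0 := by
    rw [ha2, wt3_0, if_neg (by decide : ¬ (1 : Fin 2) = 0)]
  have hv21 : wt3 q 1 a2 = 1 := by
    rw [ha2, wt3_1, if_pos rfl]
    norm_num
  have hv22 : wt3 q 2 a2 = 1 := by rw [ha2, wt3_2]
  fin_cases j
  · show α * wt3 q 0 a1 + β * wt3 q 0 a1' + u 1 * wt3 q 0 a2 = u 0
    rw [hv10, hv10', hv20, hα, hβ]
    ring
  · show α * wt3 q 1 a1 + β * wt3 q 1 a1' + u 1 * wt3 q 1 a2 = u 1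
    rw [hv11, hv11', hv21]
    ring
  · show α * wt3 q 2 a1 + β * wt3 q 2 a1' + u 1 * wt3 q 2 a2 = u 2
    rw [hv12, hv12', hv22, hα, hβ]
    ring

lemma finrank_ker_lamMap (hq : 1 ≤ q) :
    Module.finrank ℝ (LinearMap.ker (lamMap q)) = 4 * q - 3 := by
  have h := LinearMap.finrank_range_add_finrank_ker (lamMap q)
  rw [LinearMap.range_eq_top.mpr (lamMap_surjective hq), finrank_top] at h
  have h1 : Module.finrank ℝ (Fin 3 → ℝ) = 3 := by
    rw [Module.finrank_pi]
    simp
  have h2 : Module.finrank ℝ (VV q → ℝ) = 4 * q := by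
    rw [Module.finrank_pi]
    rw [Fintype.card_prod, Fintype.card_fin, Fintype.card_fin]
    ring
  rw [h1, h2] at h
  omega

lemma span_le_ker (hq : 1 ≤ q) :
    vectorSpan ℝ (Set.range (gvec q)) ≤ LinearMap.ker (lamMap q) := by
  rw [vectorSpan, Submodule.span_le]
  intro z hz
  rw [Set.mem_vsub] at hz
  obtain ⟨x, hx, y, hy, rfl⟩ := hz
  obtain ⟨p, rfl⟩ := hx
  obtain ⟨p', rfl⟩ := hy
  rw [SetLike.mem_coe, LinearMap.mem_ker]
  have : gvec q p -ᵥ gvec q p' = gvec q p - gvec q p' := rfl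
  rw [this, map_sub]
  funext j
  rw [Pi.sub_apply, Pi.zero_apply]
  fin_cases j
  · show lamMap q (gvec q p) 0 - lamMap q (gvec q p') 0 = 0
    rw [lamMap_gvec0 hq, lamMap_gvec0 hq, sub_self]
  · show lamMap q (gvec q p) 1 - lamMap q (gvec q p') 1 = 0
    rw [lamMap_gvec1 hq, lamMap_gvec1 hq, sub_self]
  · show lamMap q (gvec q p) 2 - lamMap q (gvec q p') 2 = 0
    rw [lamMap_gvec2, lamMap_gvec2, sub_self]

lemma block_zero (hq : 1 ≤ q) (d : Fin (2 * q) → ℝ)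
    (hrel : ∀ i : Fin (2 * q), d (prv i) + d i = 0)
    (istar : Fin (2 * q)) (hz : d istar = 0) : ∀ i, d i = 0 := by
  have h0 : (0 : ℕ) < 2 * q := by omega
  have key : ∀ k : ℕ, ∀ hk : k < 2 * q, d ⟨k, hk⟩ = (-1 : ℝ) ^ k * d ⟨0, h0⟩ := by
    intro k
    induction k with
    | zero => intro hk; simp
    | succ k ih =>
      intro hk
      have hr := hrel ⟨k + 1, hk⟩
      have hprv : prv (⟨k + 1, hk⟩ : Fin (2 * q)) = ⟨k, Nat.lt_of_succ_lt hk⟩ := by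
        apply Fin.ext
        rw [prv_val]
        simp
      rw [hprv] at hr
      have ihk := ih (Nat.lt_of_succ_lt hk)
      rw [pow_succ]
      have : d ⟨k + 1, hk⟩ = -d ⟨k, Nat.lt_of_succ_lt hk⟩ := by linarith
      rw [this, ihk]
      ring
  have hbase : d ⟨0, h0⟩ = 0 := by
    have hc := key istar.val istar.isLt
    rw [Fin.eta] at hc
    rw [hc] at hz
    rcases mul_eq_zero.mp hz with h | h
    · exact absurd h (by positivity)
    · exact h
  intro i
  have hc := key i.val i.isLt
  rw [Fin.eta] at hc
  rw [hc, hbase, mul_zero]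

lemma finrank_vectorSpan_gvec (hq : 2 ≤ q) :
    Module.finrank ℝ (vectorSpan ℝ (Set.range (gvec q))) = 4 * q - 3 := by
  classical
  have h0 : (0 : ℕ) < 2 * q := by omega
  have hlast : 2 * q - 1 < 2 * q := by omega
  set i0 : Fin (2 * q) := ⟨0, h0⟩ with hi0
  set ilast : Fin (2 * q) := ⟨2 * q - 1, hlast⟩ with hilast
  set p0 : VV q := (0, i0) with hp0
  set e0 : VV q := (0, ilast) with he0
  set e1 : VV q := (1, ilast) with he1
  have hd01 : e0 ≠ e1 := by
    intro h
    exact absurd (congrArg Prod.fst h) (by simp [he0, he1])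
  have hd0p : e0 ≠ p0 := by
    intro h
    have := congrArg (fun x : VV q => x.2.val) h
    simp only [he0, hp0, hi0, hilast] at this
    omega
  have hd1p : e1 ≠ p0 := by
    intro h
    exact absurd (congrArg Prod.fst h) (by simp [he1, hp0])
  set S : Finset (VV q) := Finset.univ \ {e0, e1, p0} with hS
  -- upper bound
  have hup : Module.finrank ℝ (vectorSpan ℝ (Set.range (gvec q))) ≤ 4 * q - 3 := by
    rw [← finrank_ker_lamMap (q := q) (by omega)]
    exact Submodule.finrank_mono (span_le_ker (by omega))
  -- linear independence of the family indexed by S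
  have hli : LinearIndependent ℝ (fun p : ↥S => gvec q p.1 - gvec q p0) := by
    rw [Fintype.linearIndependent_iff]
    intro g hg
    set T : ℝ := ∑ p : ↥S, g p with hT
    set G : VV q → ℝ := fun p => if hp : p ∈ S then g ⟨p, hp⟩ else 0 with hG
    set C : VV q → ℝ := fun p => G p - (if p = p0 then T else 0) with hC
    have hgsum : ∑ p : ↥S, g p • gvec q p.1 = T • gvec q p0 := by
      have hre : ∑ p : ↥S, g p • (gvec q p.1 - gvec q p0)
          = ∑ p : ↥S, g p • gvec q p.1 - (∑ p : ↥S, g p) • gvec q p0 := by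
        rw [Finset.sum_smul, ← Finset.sum_sub_distrib]
        apply Finset.sum_congr rfl
        intro p _
        rw [smul_sub]
      rw [hre] at hg
      rw [hT]
      exact sub_eq_zero.mp hg
    have hCsum : ∑ p : VV q, C p • gvec q p = 0 := by
      have hsplit : ∑ p : VV q, C p • gvec q p
          = ∑ p : VV q, G p • gvec q p
            - ∑ p : VV q, (if p = p0 then T else 0) • gvec q p := by
        rw [← Finset.sum_sub_distrib]
        apply Finset.sum_congr rfl
        intro p _
        rw [hC]
        rw [sub_smul]
      have h2 : ∑ p : VV q, (if p = p0 then T else 0) • gvec q p = T • gvec q p0 := by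
        have hterm : ∀ p : VV q, (if p = p0 then T else 0) • gvec q p
            = (if p = p0 then T • gvec q p else 0) := by
          intro p
          split_ifs <;> simp
        rw [Finset.sum_congr rfl (fun p _ => hterm p),
          Finset.sum_ite_eq' Finset.univ p0 (fun p => T • gvec q p)]
        simp
      have h1 : ∑ p : VV q, G p • gvec q p = ∑ p : ↥S, g p • gvec q p.1 := by
        rw [← Finset.sum_subset (Finset.subset_univ S) (by
          intro p _ hp
          rw [hG]
          simp only [dif_neg hp]
          rw [zero_smul])]
        rw [← Finset.sum_coe_sort S (fun p => G p • gvec q p)]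
        apply Finset.sum_congr rfl
        intro p _
        have : G p.1 = g p := by
          rw [hG]
          simp only [dif_pos p.2]
        rw [this]
      rw [hsplit, h1, h2, hgsum, sub_self]
    have hpt : ∀ v : VV q, C (v.1, prv v.2) + C (v.1, v.2) = 0 := by
      intro v
      have hv := congrFun hCsum v
      rw [sum_smul_gvec_apply C v] at hv
      simpa using hv
    have hCzero : ∀ p : VV q, C p = 0 := by
      intro p
      have hstar : C (p.1, ilast) = 0 := by
        have hp2 : p.1 = 0 ∨ p.1 = 1 := by
          have hlt2 := p.1.isLt
          rcases (show p.1.val = 0 ∨ p.1.val = 1 by omega) with h | h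
          · left; exact Fin.ext h
          · right; exact Fin.ext h
        have hnot : (p.1, ilast) = e0 ∨ (p.1, ilast) = e1 := by
          rcases hp2 with h | h
          · left; rw [he0, h]
          · right; rw [he1, h]
        have hnotS : (p.1, ilast) ∉ S := by
          rw [hS, Finset.mem_sdiff]
          rintro ⟨-, hmem3⟩
          apply hmem3
          rcases hnot with h | h <;> rw [h] <;> simp
        have hnp0 : (p.1, ilast) ≠ p0 := by
          rcases hnot with h | h
          · rw [h]; exact hd0p
          · rw [h]; exact hd1p
        rw [hC]
        simp only [hG, dif_neg hnotS, if_neg hnp0, sub_zero]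
      exact block_zero (by omega) (fun i => C (p.1, i)) (fun i => hpt (p.1, i)) ilast hstar p.2
    intro p
    have hz := hCzero p.1
    simp only [hC] at hz
    have hmemS : (p : VV q) ∈ Finset.univ \ {e0, e1, p0} := p.2
    have hnp0 : (p : VV q) ≠ p0 := by
      rw [Finset.mem_sdiff] at hmemS
      intro hcon
      exact hmemS.2 (by rw [hcon]; simp)
    rw [if_neg hnp0, sub_zero] at hz
    simp only [hG, dif_pos p.2] at hz
    rwa [Subtype.coe_eta] at hz
  have hmem : ∀ p : ↥S, gvec q p.1 - gvec q p0 ∈ vectorSpan ℝ (Set.range (gvec q)) :=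
    fun p => vsub_mem_vectorSpan ℝ (Set.mem_range_self p.1) (Set.mem_range_self p0)
  have hli' : LinearIndependent ℝ
      (fun p : ↥S => (⟨gvec q p.1 - gvec q p0, hmem p⟩ :
        ↥(vectorSpan ℝ (Set.range (gvec q))))) := by
    apply LinearIndependent.of_comp ((vectorSpan ℝ (Set.range (gvec q))).subtype)
    exact hli
  have hcard : Fintype.card ↥S = 4 * q - 3 := by
    rw [Fintype.card_coe, hS, Finset.card_sdiff_of_subset (Finset.subset_univ _), Finset.card_univ]
    have hc : Fintype.card (VV q) = 4 * q := by
      rw [Fintype.card_prod, Fintype.card_fin, Fintype.card_fin]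
      ring
    have h3 : ({e0, e1, p0} : Finset (VV q)).card = 3 := by
      rw [Finset.card_insert_of_notMem (by simp [hd01, hd0p]),
        Finset.card_insert_of_notMem (by simp [hd1p]), Finset.card_singleton]
    rw [hc, h3]
  have hlow : 4 * q - 3 ≤ Module.finrank ℝ (vectorSpan ℝ (Set.range (gvec q))) := by
    rw [← hcard]
    exact hli'.fintype_card_le_finrank
  exact le_antisymm hup hlow

lemma polyDim_eq (hq : 2 ≤ q) :
    polyDim (edgePolytope (twoCyclesGraph (2 * q))) = 4 * q - 3 := by
  have hvs : vectorSpan ℝ (convexHull ℝ (Set.range (gvec q)))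
      = vectorSpan ℝ (Set.range (gvec q)) := by
    rw [← direction_affineSpan, affineSpan_convexHull, direction_affineSpan]
  rw [polyDim, edgePolytope, rho_image (by omega : 1 ≤ q), hvs, finrank_vectorSpan_gvec hq]

end Dimension


/-- For the disjoint union `G'` of two `2q`-cycles (`q ≥ 3`), the degree
of the `h^*`-polynomial of the edge polytope satisfies `deg(P_{G'}) ≥ 2q - 2 ≥ q`. -/
theorem stmt_5 (q : ℕ) (hq : 3 ≤ q) :
    2 * q - 2 ≤ hstarDeg (edgePolytope (twoCyclesGraph (2 * q))) ∧
    q ≤ hstarDeg (edgePolytope (twoCyclesGraph (2 * q))) := by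
  have hset : {i : ℕ | hstarCoeff (edgePolytope (twoCyclesGraph (2 * q)))
      (polyDim (edgePolytope (twoCyclesGraph (2 * q)))) i ≠ 0} = Set.Iic (2 * q - 2) := by
    rw [polyDim_eq (by omega)]
    ext i
    exact hstar_ne_iff (by omega) i
  have hdeg : hstarDeg (edgePolytope (twoCyclesGraph (2 * q))) = 2 * q - 2 := by
    rw [hstarDeg, hset, csSup_Iic]
  rw [hdeg]
  omega
end
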